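/- arXiv:1202.6229 — 3 statements merged into one kernel-verified Lean document; each statement's English description precedes it below -/
import Mathlib

section
/- The number of standard Young tableaux of the rectangular shape (n,n,n) (three rows of length n) equals 2·(3n)!/(n!·(n+1)!·(n+2)!). -/
/-- The set of cells of the Young diagram with row lengths `L`:
`(i, j)` is a cell iff `j < L[i]`. -/
def cells (L : List ℕ) : Finset (ℕ × ℕ) :=
  (Finset.range L.length ×ˢ Finset.range (L.foldr max 0)).filter
    (fun p => p.2 < L.getD p.1 0)

/-- `f` is a standard Young tableau of shape `L`: a bijective filling of the cells
with `1,…,n` (modeled as `Fin L.sum`), strictly increasing along each row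
(left-to-right) and each column (top-to-bottom). -/
def IsSYT (L : List ℕ) (f : cells L → Fin L.sum) : Prop :=
  Function.Bijective f ∧
  (∀ a b : cells L, (↑a : ℕ × ℕ).1 = (↑b : ℕ × ℕ).1 →
      (↑a : ℕ × ℕ).2 < (↑b : ℕ × ℕ).2 → f a < f b) ∧
  (∀ a b : cells L, (↑a : ℕ × ℕ).2 = (↑b : ℕ × ℕ).2 →
      (↑a : ℕ × ℕ).1 < (↑b : ℕ × ℕ).1 → f a < f b)

/-- The number of standard Young tableaux of shape `L`. -/
noncomputable def sytCount (L : List ℕ) : ℕ := Nat.card {f : cells L → Fin L.sum // IsSYT L f}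


namespace SYT3

open Finset

/-- number of positions `l < k` carrying letter `i`. -/
def cnt {N : ℕ} (w : Fin N → Fin 3) (k : ℕ) (i : Fin 3) : ℕ :=
  (Finset.univ.filter (fun l : Fin N => (l : ℕ) < k ∧ w l = i)).card

def IsBallot {N : ℕ} (w : Fin N → Fin 3) : Prop :=
  ∀ k : ℕ, cnt w k 1 ≤ cnt w k 0 ∧ cnt w k 2 ≤ cnt w k 1

def BWP {N : ℕ} (a b c : ℕ) (w : Fin N → Fin 3) : Prop :=
  IsBallot w ∧ cnt w N 0 = a ∧ cnt w N 1 = b ∧ cnt w N 2 = c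

def BW (N a b c : ℕ) := {w : Fin N → Fin 3 // BWP a b c w}

instance (N a b c : ℕ) : Finite (BW N a b c) := by
  unfold BW; infer_instance

noncomputable def W (a b c : ℕ) : ℕ := Nat.card (BW (a + b + c) a b c)

lemma cnt_stable {N : ℕ} (w : Fin N → Fin 3) {k : ℕ} (hk : N ≤ k) (i : Fin 3) :
    cnt w k i = cnt w N i := by
  unfold cnt
  congr 1
  apply Finset.filter_congr
  intro l _
  simp only [eq_iff_iff, and_congr_left_iff]
  intro _
  constructor <;> intro _
  · exact l.isLt
  · exact lt_of_lt_of_le l.isLt hk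

lemma cnt_succ {N : ℕ} (w : Fin N → Fin 3) {k : ℕ} (hk : k < N) (i : Fin 3) :
    cnt w (k + 1) i = cnt w k i + if w ⟨k, hk⟩ = i then 1 else 0 := by
  unfold cnt
  have hsplit : (Finset.univ.filter (fun l : Fin N => (l : ℕ) < k + 1 ∧ w l = i))
      = (Finset.univ.filter (fun l : Fin N => (l : ℕ) < k ∧ w l = i)) ∪
        (Finset.univ.filter (fun l : Fin N => l = ⟨k, hk⟩ ∧ w l = i)) := by
    ext l
    simp only [mem_filter, mem_univ, true_and, mem_union]
    constructor
    · rintro ⟨h1, h2⟩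
      rcases Nat.lt_succ_iff_lt_or_eq.mp h1 with h | h
      · exact Or.inl ⟨h, h2⟩
      · exact Or.inr ⟨Fin.ext h, h2⟩
    · rintro (⟨h1, h2⟩ | ⟨h1, h2⟩)
      · exact ⟨Nat.lt_succ_of_lt h1, h2⟩
      · exact ⟨by rw [h1]; exact Nat.lt_succ_self k, h2⟩
  rw [hsplit, Finset.card_union_of_disjoint]
  · congr 1
    by_cases h : w ⟨k, hk⟩ = i
    · rw [if_pos h]
      rw [Finset.card_eq_one]
      exact ⟨⟨k, hk⟩, by ext l; simp only [mem_filter, mem_univ, true_and, mem_singleton]; exact ⟨fun h' => h'.1, fun h' => ⟨h', h' ▸ h⟩⟩⟩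
    · rw [if_neg h]
      rw [Finset.card_eq_zero]
      ext l
      simp only [mem_filter, mem_univ, true_and, notMem_empty, iff_false, not_and]
      rintro rfl
      exact h
  · rw [Finset.disjoint_left]
    rintro l hl hr
    simp only [mem_filter, mem_univ, true_and] at hl hr
    rw [hr.1] at hl
    exact absurd hl.1 (lt_irrefl k)

/-- `BW` is empty unless the counts are weakly decreasing. -/
lemma BW_empty {N a b c : ℕ} (h : ¬ (b ≤ a ∧ c ≤ b)) : IsEmpty (BW N a b c) := by
  constructor
  rintro ⟨w, hw, h0, h1, h2⟩
  have := hw N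
  rw [h0, h1, h2] at this
  exact h ⟨this.1, this.2⟩

lemma W_eq_zero {a b c : ℕ} (h : ¬ (b ≤ a ∧ c ≤ b)) : W a b c = 0 := by
  have := BW_empty (N := a + b + c) h
  simp [W, Nat.card_of_isEmpty]

lemma W_zero : W 0 0 0 = 1 := by
  have : Unique (BW 0 0 0 0) := by
    refine ⟨⟨⟨fun l => l.elim0, ?_, ?_, ?_, ?_⟩⟩, ?_⟩
    · intro k; simp [cnt]
    · simp [cnt]
    · simp [cnt]
    · simp [cnt]
    · rintro ⟨w, _⟩
      apply Subtype.ext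
      funext l
      exact l.elim0
  simp [W, Nat.card_unique]

lemma cnt_snoc_le {N : ℕ} (v : Fin N → Fin 3) (i : Fin 3) {k : ℕ} (hk : k ≤ N) (j : Fin 3) :
    cnt (Fin.snoc v i) k j = cnt v k j := by
  unfold cnt
  refine Finset.card_bij' (fun (l : Fin (N + 1)) hl =>
      (⟨(l : ℕ), by
        simp only [Finset.mem_filter, Finset.mem_univ, true_and] at hl
        exact lt_of_lt_of_le hl.1 hk⟩ : Fin N))
    (fun (l : Fin N) _ => Fin.castSucc l) ?_ ?_ ?_ ?_
  · intro l hl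
    simp only [Finset.mem_filter, Finset.mem_univ, true_and] at hl ⊢
    have hlN : (l : ℕ) < N := lt_of_lt_of_le hl.1 hk
    refine ⟨hl.1, ?_⟩
    have : l = Fin.castSucc ⟨(l : ℕ), hlN⟩ := by ext; rfl
    rw [this, Fin.snoc_castSucc] at hl
    exact hl.2
  · intro l hl
    simp only [Finset.mem_filter, Finset.mem_univ, true_and] at hl ⊢
    exact ⟨hl.1, by rw [Fin.snoc_castSucc]; exact hl.2⟩
  · intro l _
    apply Fin.ext
    rfl
  · intro l _
    apply Fin.ext
    rfl

lemma cnt_snoc_top {N : ℕ} (v : Fin N → Fin 3) (i : Fin 3) (j : Fin 3) :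
    cnt (Fin.snoc v i) (N + 1) j = cnt v N j + if i = j then 1 else 0 := by
  have h := cnt_succ (Fin.snoc v i) (k := N) (Nat.lt_succ_self N) j
  have hlast : (⟨N, Nat.lt_succ_self N⟩ : Fin (N + 1)) = Fin.last N := rfl
  rw [hlast, Fin.snoc_last] at h
  rw [h, cnt_snoc_le v i (le_refl N) j]

/-- the fiber of words ending with letter `i₀`. -/
def fiber_equiv (N a b c : ℕ) (i₀ : Fin 3) (a' b' c' : ℕ)
    (h0 : a = a' + if i₀ = 0 then 1 else 0)
    (h1 : b = b' + if i₀ = 1 then 1 else 0)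
    (h2 : c = c' + if i₀ = 2 then 1 else 0)
    (hba : b ≤ a) (hcb : c ≤ b) :
    {w : Fin (N + 1) → Fin 3 // BWP a b c w ∧ w (Fin.last N) = i₀} ≃ BW N a' b' c' := by
  refine ⟨fun x => ⟨Fin.init x.1, ?_⟩, fun y => ⟨Fin.snoc y.1 i₀, ?_⟩, ?_, ?_⟩
  · obtain ⟨w, ⟨hb, t0, t1, t2⟩, hlast⟩ := x
    show BWP a' b' c' (Fin.init w)
    have hsn : Fin.snoc (Fin.init w) (w (Fin.last N)) = w := Fin.snoc_init_self w
    have key : ∀ j : Fin 3, cnt w (N + 1) j = cnt (Fin.init w) N j + if i₀ = j then 1 else 0 := by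
      intro j
      conv_lhs => rw [← hsn]
      rw [hlast, cnt_snoc_top]
    have keyN : ∀ j : Fin 3, cnt w N j = cnt (Fin.init w) N j := by
      intro j
      conv_lhs => rw [← hsn]
      rw [hlast, cnt_snoc_le _ _ (le_refl N)]
    have hc : ∀ j : Fin 3, ∀ k, N ≤ k → cnt (Fin.init w) k j = cnt w N j := by
      intro j k hkN
      rw [cnt_stable _ hkN, keyN]
    have hck : ∀ j : Fin 3, ∀ k, k ≤ N → cnt (Fin.init w) k j = cnt w k j := by
      intro j k hkN
      conv_rhs => rw [← hsn]
      rw [hlast, cnt_snoc_le _ _ hkN]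
    refine ⟨?_, ?_, ?_, ?_⟩
    · intro k
      rcases le_or_gt k N with hk | hk
      · rw [hck 0 k hk, hck 1 k hk, hck 2 k hk]; exact hb k
      · rw [hc 0 k hk.le, hc 1 k hk.le, hc 2 k hk.le]
        have := hb N; exact this
    · have := key 0
      rw [t0] at this
      rw [h0] at this
      omega
    · have := key 1
      rw [t1, h1] at this
      omega
    · have := key 2
      rw [t2, h2] at this
      omega
  · obtain ⟨v, hb, t0, t1, t2⟩ := y
    have ht : ∀ j : Fin 3, cnt (Fin.snoc v i₀) (N + 1) j = cnt v N j + if i₀ = j then 1 else 0 :=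
      cnt_snoc_top v i₀
    have H : BWP a b c (Fin.snoc v i₀) := by
      refine ⟨?_, ?_, ?_, ?_⟩
      · intro k
        rcases le_or_gt k N with hk | hk
        · rw [cnt_snoc_le _ _ hk, cnt_snoc_le _ _ hk, cnt_snoc_le _ _ hk]; exact hb k
        · have hk1 : N + 1 ≤ k := hk
          rw [cnt_stable _ hk1, cnt_stable _ hk1, cnt_stable _ hk1, ht 0, ht 1, ht 2,
            t0, t1, t2]
          constructor
          · omega
          · omega
      · rw [ht 0, t0]; omega
      · rw [ht 1, t1]; omega
      · rw [ht 2, t2]; omega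
    exact ⟨H, by simp⟩
  · rintro ⟨w, hw, hlast⟩
    apply Subtype.ext
    have : Fin.snoc (Fin.init w) (w (Fin.last N)) = w := Fin.snoc_init_self w
    rw [hlast] at this
    exact this
  · rintro ⟨v, hv⟩
    apply Subtype.ext
    exact Fin.init_snoc (α := fun _ : Fin (N + 1) => Fin 3) i₀ v

lemma cnt_pos_of_last {N : ℕ} (w : Fin (N + 1) → Fin 3) (i₀ : Fin 3)
    (h : w (Fin.last N) = i₀) : 0 < cnt w (N + 1) i₀ := by
  unfold cnt
  rw [Finset.card_pos]
  exact ⟨Fin.last N, by simp [h]⟩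

lemma card_fiber (N a b c : ℕ) (i₀ : Fin 3) (a' b' c' : ℕ)
    (h0 : a = a' + if i₀ = 0 then 1 else 0)
    (h1 : b = b' + if i₀ = 1 then 1 else 0)
    (h2 : c = c' + if i₀ = 2 then 1 else 0)
    (hba : b ≤ a) (hcb : c ≤ b) :
    Nat.card {w : Fin (N + 1) → Fin 3 // BWP a b c w ∧ w (Fin.last N) = i₀}
      = Nat.card (BW N a' b' c') :=
  Nat.card_congr (fiber_equiv N a b c i₀ a' b' c' h0 h1 h2 hba hcb)

lemma card_fiber_zero (N a b c : ℕ) (i₀ : Fin 3)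
    (h : (if i₀ = 0 then a else if i₀ = 1 then b else c) = 0) :
    Nat.card {w : Fin (N + 1) → Fin 3 // BWP a b c w ∧ w (Fin.last N) = i₀} = 0 := by
  rw [Nat.card_eq_zero]
  left
  constructor
  rintro ⟨w, ⟨_, t0, t1, t2⟩, hlast⟩
  have := cnt_pos_of_last w i₀ hlast
  fin_cases i₀ <;> simp_all

lemma three_split (α : Type) [Finite α] (f : α → Fin 3) :
    Nat.card α = Nat.card {x // f x = 0} + Nat.card {x // f x = 1} + Nat.card {x // f x = 2} := by
  classical
  have e := Equiv.sigmaFiberEquiv f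
  rw [← Nat.card_congr e]
  have : Nat.card ((i : Fin 3) × {x // f x = i}) = ∑ i : Fin 3, Nat.card {x // f x = i} := by
    have := Fintype.ofFinite α
    simp [Nat.card_eq_fintype_card, Fintype.card_sigma]
  rw [this, Fin.sum_univ_three]

lemma card_rec (N a b c : ℕ) (hs : a + b + c = N + 1) (hba : b ≤ a) (hcb : c ≤ b) :
    Nat.card (BW (N + 1) a b c) =
      (if 0 < a then Nat.card (BW N (a - 1) b c) else 0)
      + (if 0 < b then Nat.card (BW N a (b - 1) c) else 0)
      + (if 0 < c then Nat.card (BW N a b (c - 1)) else 0) := by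
  have hsplit := three_split (BW (N + 1) a b c) (fun x => x.1 (Fin.last N))
  have flat : ∀ i₀ : Fin 3,
      Nat.card {x : BW (N + 1) a b c // x.1 (Fin.last N) = i₀}
        = Nat.card {w : Fin (N + 1) → Fin 3 // BWP a b c w ∧ w (Fin.last N) = i₀} := by
    intro i₀
    unfold BW
    exact Nat.card_congr (Equiv.subtypeSubtypeEquivSubtypeInter (BWP a b c) (fun w => w (Fin.last N) = i₀))
  rw [hsplit, flat 0, flat 1, flat 2]
  congr 1
  congr 1
  · by_cases ha : 0 < a
    · rw [if_pos ha]
      exact card_fiber N a b c 0 (a - 1) b c (by simp; omega) (by simp) (by simp) hba hcb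
    · rw [if_neg ha]
      exact card_fiber_zero N a b c 0 (by simpa using by omega)
  · by_cases hb : 0 < b
    · rw [if_pos hb]
      exact card_fiber N a b c 1 a (b - 1) c (by simp) (by simp; omega) (by simp) hba hcb
    · rw [if_neg hb]
      exact card_fiber_zero N a b c 1 (by simp; omega)
  · by_cases hc : 0 < c
    · rw [if_pos hc]
      exact card_fiber N a b c 2 a b (c - 1) (by simp) (by simp) (by simp; omega) hba hcb
    · rw [if_neg hc]
      exact card_fiber_zero N a b c 2 (by simp; omega)

lemma card_BW_eq_W {N x y z : ℕ} (h : N = x + y + z) : Nat.card (BW N x y z) = W x y z := by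
  subst h; rfl

lemma W_rec (a b c : ℕ) (h : 0 < a + b + c) (hba : b ≤ a) (hcb : c ≤ b) :
    W a b c = (if 0 < a then W (a - 1) b c else 0)
      + (if 0 < b then W a (b - 1) c else 0)
      + (if 0 < c then W a b (c - 1) else 0) := by
  obtain ⟨N, hN⟩ : ∃ N, a + b + c = N + 1 := ⟨a + b + c - 1, by omega⟩
  unfold W
  rw [show a + b + c = N + 1 from hN]
  rw [card_rec N a b c hN hba hcb]
  congr 1
  congr 1
  · by_cases ha : 0 < a
    · rw [if_pos ha, if_pos ha]; exact card_BW_eq_W (by omega)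
    · rw [if_neg ha, if_neg ha]
  · by_cases hb : 0 < b
    · rw [if_pos hb, if_pos hb]; exact card_BW_eq_W (by omega)
    · rw [if_neg hb, if_neg hb]
  · by_cases hc : 0 < c
    · rw [if_pos hc, if_pos hc]; exact card_BW_eq_W (by omega)
    · rw [if_neg hc, if_neg hc]

lemma W_formula (s : ℕ) : ∀ a b c : ℕ, a + b + c = s → b ≤ a → c ≤ b →
    W a b c * ((a + 2).factorial * (b + 1).factorial * c.factorial)
      = (a + b + c).factorial * (a - b + 1) * (b - c + 1) * (a - c + 2) := by
  induction s using Nat.strong_induction_on with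
  | _ s ih =>
    intro a b c hsum hba hcb
    rcases Nat.eq_zero_or_pos s with hs | hs
    · have ha : a = 0 := by omega
      have hb : b = 0 := by omega
      have hc : c = 0 := by omega
      subst ha; subst hb; subst hc
      rw [W_zero]
      decide
    · obtain ⟨m, hm⟩ : ∃ m, s = m + 1 := ⟨s - 1, by omega⟩
      subst hm
      have ha : 0 < a := by omega
      rw [W_rec a b c (by omega) hba hcb]
      have E0 : (if 0 < a then W (a - 1) b c else 0)
            * ((a + 1).factorial * (b + 1).factorial * c.factorial)
          = m.factorial * (a - b) * (b - c + 1) * ((a - c) + 1) := by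
        rw [if_pos ha]
        by_cases hp : b ≤ a - 1
        · have h := ih m (by omega) (a - 1) b c (by omega) hp hcb
          have r1 : a - 1 + 2 = a + 1 := by omega
          have r2 : a - 1 - b + 1 = a - b := by omega
          have r3 : a - 1 - c + 2 = (a - c) + 1 := by omega
          have r4 : a - 1 + b + c = m := by omega
          rw [r1, r2, r3, r4] at h
          rw [h]
        · have hz : W (a - 1) b c = 0 := W_eq_zero (by tauto)
          have hzz : a - b = 0 := by omega
          rw [hz, hzz]
          ring
      have E1 : (if 0 < b then W a (b - 1) c else 0)
            * ((a + 2).factorial * b.factorial * c.factorial)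
          = m.factorial * ((a - b) + 2) * (b - c) * ((a - c) + 2) := by
        by_cases hb : 0 < b
        · rw [if_pos hb]
          by_cases hq : c ≤ b - 1
          · have h := ih m (by omega) a (b - 1) c (by omega) (by omega) hq
            have r1 : b - 1 + 1 = b := by omega
            have r2 : a - (b - 1) + 1 = (a - b) + 2 := by omega
            have r3 : b - 1 - c + 1 = b - c := by omega
            have r4 : a + (b - 1) + c = m := by omega
            rw [r1, r2, r3, r4] at h
            rw [h]
          · have hz : W a (b - 1) c = 0 := W_eq_zero (by tauto)
            have hzz : b - c = 0 := by omega
            rw [hz, hzz]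
            ring
        · rw [if_neg hb]
          have hc0 : c = 0 := by omega
          have hzz : b - c = 0 := by omega
          rw [hzz]
          ring
      have E2 : (if 0 < c then W a b (c - 1) else 0)
            * ((a + 2).factorial * (b + 1).factorial * c.factorial)
          = m.factorial * ((a - b) + 1) * ((b - c) + 2) * ((a - c) + 3) * c := by
        by_cases hc : 0 < c
        · rw [if_pos hc]
          obtain ⟨c', rfl⟩ : ∃ c', c = c' + 1 := ⟨c - 1, by omega⟩
          have h := ih m (by omega) a b c' (by omega) hba (by omega)
          have r2 : a - b + 1 = (a - b) + 1 := rfl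
          have r3 : b - c' + 1 = (b - (c' + 1)) + 2 := by omega
          have r4 : a - c' + 2 = (a - (c' + 1)) + 3 := by omega
          have r5 : a + b + c' = m := by omega
          rw [r3, r4, r5] at h
          have hfc : (c' + 1).factorial = (c' + 1) * c'.factorial := Nat.factorial_succ c'
          have expand : W a b c' * ((a + 2).factorial * (b + 1).factorial * (c' + 1).factorial)
              = (W a b c' * ((a + 2).factorial * (b + 1).factorial * c'.factorial)) * (c' + 1) := by
            rw [hfc]; ring
          rw [show (c' + 1 - 1) = c' from rfl]
          rw [expand]
          try rw [h]
          try ring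
        · rw [if_neg hc]
          have hc0 : c = 0 := by omega
          rw [hc0]
          ring
      -- combine
      have hfa : (a + 2).factorial = (a + 2) * (a + 1).factorial := Nat.factorial_succ (a + 1)
      have hfb : (b + 1).factorial = (b + 1) * b.factorial := Nat.factorial_succ b
      have hfm : (a + b + c).factorial = (a + b + c) * m.factorial := by
        rw [hsum]; exact Nat.factorial_succ m
      have h0 : (if 0 < a then W (a - 1) b c else 0)
            * ((a + 2).factorial * (b + 1).factorial * c.factorial)
          = (a + 2) * (m.factorial * (a - b) * (b - c + 1) * ((a - c) + 1)) := by
        rw [← E0, hfa]; ring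
      have h1 : (if 0 < b then W a (b - 1) c else 0)
            * ((a + 2).factorial * (b + 1).factorial * c.factorial)
          = (b + 1) * (m.factorial * ((a - b) + 2) * (b - c) * ((a - c) + 2)) := by
        rw [← E1, hfb]; ring
      rw [add_mul, add_mul, h0, h1, E2, hfm]
      obtain ⟨p, hp⟩ : ∃ p, a = b + p := ⟨a - b, by omega⟩
      obtain ⟨q, hq⟩ : ∃ q, b = c + q := ⟨b - c, by omega⟩
      have e1 : a - b = p := by omega
      have e2 : b - c = q := by omega
      have e3 : a - c = p + q := by omega
      rw [e1, e2, e3, hp, hq]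
      ring

/-! ### Part A : tableaux of shape (n,n,n) ↔ ballot words -/

section PartA

variable {n : ℕ}

lemma mem_cells' {p : ℕ × ℕ} : p ∈ cells [n, n, n] ↔ p.1 < 3 ∧ p.2 < n := by
  obtain ⟨i, j⟩ := p
  have hm : [n, n, n].foldr max 0 = n := by simp
  simp only [cells, Finset.mem_filter, Finset.mem_product, Finset.mem_range, hm,
    List.length_cons, List.length_nil]
  constructor
  · rintro ⟨⟨h1, h2⟩, h3⟩
    refine ⟨by simpa using h1, ?_⟩
    simpa using h2
  · rintro ⟨h1, h2⟩
    refine ⟨⟨by simpa using h1, by simpa using h2⟩, ?_⟩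
    have h1' : i < 3 := by simpa using h1
    interval_cases i <;> simpa using h2

lemma row_lt3 (q : cells [n, n, n]) : (q : ℕ × ℕ).1 < 3 := (mem_cells'.mp q.2).1

lemma col_ltn (q : cells [n, n, n]) : (q : ℕ × ℕ).2 < n := (mem_cells'.mp q.2).2

lemma msum_eq : [n, n, n].sum = n + n + n := by simp; ring

end PartA

section PartA2

variable {n : ℕ}

/-- The reading word of a tableau: position `k` records the row containing value `k`. -/
noncomputable def word (f : cells [n, n, n] → Fin ([n, n, n].sum)) (hf : IsSYT [n, n, n] f) :
    Fin ([n, n, n].sum) → Fin 3 :=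
  fun k => ⟨(((Equiv.ofBijective f hf.1).symm k : cells [n, n, n]) : ℕ × ℕ).1, row_lt3 _⟩

lemma symm_apply (f : cells [n, n, n] → Fin ([n, n, n].sum)) (hf : IsSYT [n, n, n] f)
    (q : cells [n, n, n]) : (Equiv.ofBijective f hf.1).symm (f q) = q :=
  (Equiv.ofBijective f hf.1).symm_apply_apply q

lemma word_apply_f (f : cells [n, n, n] → Fin ([n, n, n].sum)) (hf : IsSYT [n, n, n] f)
    (q : cells [n, n, n]) : word f hf (f q) = ⟨(q : ℕ × ℕ).1, row_lt3 q⟩ := by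
  unfold word
  apply Fin.ext
  simp only
  rw [symm_apply f hf q]

lemma word_cnt (f : cells [n, n, n] → Fin ([n, n, n].sum)) (hf : IsSYT [n, n, n] f)
    (p : cells [n, n, n]) :
    cnt (word f hf) (f p : ℕ) ⟨(p : ℕ × ℕ).1, row_lt3 p⟩ = (p : ℕ × ℕ).2 := by
  set e := Equiv.ofBijective f hf.1 with he
  unfold cnt
  rw [← Finset.card_range ((p : ℕ × ℕ).2)]
  refine Finset.card_bij' (fun l hl => ((e.symm l : cells [n, n, n]) : ℕ × ℕ).2)
    (fun (jv : ℕ) hj => f ⟨((p : ℕ × ℕ).1, jv),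
      mem_cells'.mpr ⟨row_lt3 p, lt_trans (Finset.mem_range.mp hj) (col_ltn p)⟩⟩) ?_ ?_ ?_ ?_
  · -- maps into range
    intro l hl
    simp only [Finset.mem_filter, Finset.mem_univ, true_and] at hl
    obtain ⟨hlt, hrow⟩ := hl
    have hrow' : ((e.symm l : cells [n, n, n]) : ℕ × ℕ).1 = (p : ℕ × ℕ).1 :=
      congrArg Fin.val hrow
    rw [Finset.mem_range]
    by_contra hge
    push_neg at hge
    rcases eq_or_lt_of_le hge with heq | hlt2
    · have : e.symm l = p := by
        apply Subtype.ext
        apply Prod.ext hrow' heq.symm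
      have : l = f p := by
        have h2 := congrArg e this
        rwa [e.apply_symm_apply] at h2
      omega
    · have := hf.2.1 p (e.symm l) hrow'.symm hlt2
      have h2 : f (e.symm l) = l := e.apply_symm_apply l
      rw [h2] at this
      omega
  · -- maps into filter
    intro jv hj
    simp only [Finset.mem_filter, Finset.mem_univ, true_and]
    have hmem : (((p : ℕ × ℕ).1, jv)) ∈ cells [n, n, n] :=
      mem_cells'.mpr ⟨row_lt3 p, lt_trans (Finset.mem_range.mp hj) (col_ltn p)⟩
    have hlt := hf.2.1 ⟨((p : ℕ × ℕ).1, jv), hmem⟩ p rfl (by simpa using Finset.mem_range.mp hj)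
    constructor
    · exact hlt
    · apply Fin.ext
      show ((e.symm (f _) : cells [n, n, n]) : ℕ × ℕ).1 = (p : ℕ × ℕ).1
      rw [symm_apply f hf]
  · -- left inverse
    intro l hl
    simp only [Finset.mem_filter, Finset.mem_univ, true_and] at hl
    obtain ⟨hlt, hrow⟩ := hl
    have hrow' : ((e.symm l : cells [n, n, n]) : ℕ × ℕ).1 = (p : ℕ × ℕ).1 :=
      congrArg Fin.val hrow
    have hcell : (⟨((p : ℕ × ℕ).1, ((e.symm l : cells [n, n, n]) : ℕ × ℕ).2),
        mem_cells'.mpr ⟨row_lt3 p, col_ltn (e.symm l)⟩⟩ :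
        cells [n, n, n]) = e.symm l := by
      apply Subtype.ext
      exact Prod.ext hrow'.symm rfl
    show f ⟨((p : ℕ × ℕ).1, ((e.symm l : cells [n, n, n]) : ℕ × ℕ).2),
        mem_cells'.mpr ⟨row_lt3 p, col_ltn (e.symm l)⟩⟩ = l
    rw [hcell]
    exact e.apply_symm_apply l
  · -- right inverse
    intro jv hj
    show ((e.symm (f _) : cells [n, n, n]) : ℕ × ℕ).2 = jv
    rw [symm_apply f hf]

end PartA2

section PartA3

variable {n : ℕ}

lemma word_count (f : cells [n, n, n] → Fin ([n, n, n].sum)) (hf : IsSYT [n, n, n] f)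
    (i : Fin 3) : cnt (word f hf) ([n, n, n].sum) i = n := by
  set e := Equiv.ofBijective f hf.1 with he
  unfold cnt
  conv_rhs => rw [← Finset.card_range n]
  refine Finset.card_bij' (fun l hl => ((e.symm l : cells [n, n, n]) : ℕ × ℕ).2)
    (fun (jv : ℕ) hj => f ⟨((i : ℕ), jv),
      mem_cells'.mpr ⟨i.isLt, Finset.mem_range.mp hj⟩⟩) ?_ ?_ ?_ ?_
  · intro l hl
    exact Finset.mem_range.mpr (col_ltn _)
  · intro jv hj
    simp only [Finset.mem_filter, Finset.mem_univ, true_and]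
    refine ⟨(f _).isLt, ?_⟩
    rw [word_apply_f f hf]
  · intro l hl
    simp only [Finset.mem_filter, Finset.mem_univ, true_and] at hl
    have hrow' : ((e.symm l : cells [n, n, n]) : ℕ × ℕ).1 = (i : ℕ) :=
      congrArg Fin.val hl.2
    have hcell : (⟨((i : ℕ), ((e.symm l : cells [n, n, n]) : ℕ × ℕ).2),
        mem_cells'.mpr ⟨i.isLt, col_ltn (e.symm l)⟩⟩ :
        cells [n, n, n]) = e.symm l := by
      apply Subtype.ext
      exact Prod.ext hrow'.symm rfl
    show f ⟨((i : ℕ), ((e.symm l : cells [n, n, n]) : ℕ × ℕ).2),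
        mem_cells'.mpr ⟨i.isLt, col_ltn (e.symm l)⟩⟩ = l
    rw [hcell]
    exact e.apply_symm_apply l
  · intro jv hj
    show ((e.symm (f _) : cells [n, n, n]) : ℕ × ℕ).2 = jv
    rw [symm_apply f hf]

lemma word_ballot_pair (f : cells [n, n, n] → Fin ([n, n, n].sum)) (hf : IsSYT [n, n, n] f)
    (i i' : Fin 3) (hii : (i : ℕ) < (i' : ℕ)) (k : ℕ) :
    cnt (word f hf) k i' ≤ cnt (word f hf) k i := by
  set e := Equiv.ofBijective f hf.1 with he
  unfold cnt
  apply Finset.card_le_card_of_injOn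
    (fun l => f ⟨((i : ℕ), ((e.symm l : cells [n, n, n]) : ℕ × ℕ).2),
      mem_cells'.mpr ⟨i.isLt, col_ltn (e.symm l)⟩⟩)
  · intro l hl
    simp only [Finset.mem_coe, Finset.mem_filter, Finset.mem_univ, true_and] at hl ⊢
    obtain ⟨hlt, hrow⟩ := hl
    have hrow' : ((e.symm l : cells [n, n, n]) : ℕ × ℕ).1 = (i' : ℕ) :=
      congrArg Fin.val hrow
    have hcol := hf.2.2 ⟨((i : ℕ), ((e.symm l : cells [n, n, n]) : ℕ × ℕ).2),
        mem_cells'.mpr ⟨i.isLt, col_ltn (e.symm l)⟩⟩ (e.symm l) rfl (by rw [hrow']; exact hii)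
    have h2 : f (e.symm l) = l := e.apply_symm_apply l
    rw [h2] at hcol
    refine ⟨lt_trans hcol hlt, ?_⟩
    rw [word_apply_f f hf]
  · intro l1 h1 l2 h2 heq
    simp only [Finset.coe_filter, Set.mem_setOf_eq] at h1 h2
    have hq := hf.1.1 heq
    have hcols : ((e.symm l1 : cells [n, n, n]) : ℕ × ℕ).2
        = ((e.symm l2 : cells [n, n, n]) : ℕ × ℕ).2 := by
      have := congrArg (fun (q : cells [n, n, n]) => (q : ℕ × ℕ).2) hq
      exact this
    have hrow1 : ((e.symm l1 : cells [n, n, n]) : ℕ × ℕ).1 = (i' : ℕ) :=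
      congrArg Fin.val h1.2.2
    have hrow2 : ((e.symm l2 : cells [n, n, n]) : ℕ × ℕ).1 = (i' : ℕ) :=
      congrArg Fin.val h2.2.2
    have : e.symm l1 = e.symm l2 := by
      apply Subtype.ext
      apply Prod.ext (by rw [hrow1, hrow2]) hcols
    have := congrArg e this
    rwa [e.apply_symm_apply, e.apply_symm_apply] at this

lemma word_isBallot (f : cells [n, n, n] → Fin ([n, n, n].sum)) (hf : IsSYT [n, n, n] f) :
    IsBallot (word f hf) :=
  fun k => ⟨word_ballot_pair f hf 0 1 (by norm_num) k, word_ballot_pair f hf 1 2 (by norm_num) k⟩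

/-- The tableau is determined by its reading word. -/
lemma cell_formula (f : cells [n, n, n] → Fin ([n, n, n].sum)) (hf : IsSYT [n, n, n] f)
    (k : Fin ([n, n, n].sum)) :
    (((Equiv.ofBijective f hf.1).symm k : cells [n, n, n]) : ℕ × ℕ)
      = ((word f hf k : ℕ), cnt (word f hf) k (word f hf k)) := by
  set e := Equiv.ofBijective f hf.1 with he
  refine Prod.ext rfl ?_
  have h := word_cnt f hf (e.symm k)
  have hk : f (e.symm k) = k := e.apply_symm_apply k
  rw [hk] at h
  rw [← h]
  rfl

lemma word_injective (f g : cells [n, n, n] → Fin ([n, n, n].sum))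
    (hf : IsSYT [n, n, n] f) (hg : IsSYT [n, n, n] g)
    (h : word f hf = word g hg) : f = g := by
  set ef := Equiv.ofBijective f hf.1 with hef
  set eg := Equiv.ofBijective g hg.1 with heg
  funext p
  have h1 := cell_formula f hf (f p)
  have h2 := cell_formula g hg (f p)
  rw [h] at h1
  have hsymm : eg.symm (f p) = ef.symm (f p) := by
    apply Subtype.ext
    rw [h1, h2]
  rw [symm_apply f hf p] at hsymm
  have := congrArg eg hsymm
  rwa [eg.apply_symm_apply] at this

end PartA3

section PartA4

open Finset

theorem card_lt_emb (N m : ℕ) (s : Finset (Fin N)) (h : s.card = m) (j : Fin m) :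
    (s.filter (fun x => x < s.orderEmbOfFin h j)).card = j := by
  conv_rhs => rw [← Finset.card_range (j : ℕ)]
  refine Finset.card_bij' (fun x hx => (((s.orderIsoOfFin h).symm
      ⟨x, (Finset.mem_filter.mp hx).1⟩ : Fin m) : ℕ))
    (fun jv hj => s.orderEmbOfFin h ⟨jv, lt_trans (Finset.mem_range.mp hj) j.isLt⟩) ?_ ?_ ?_ ?_
  · intro x hx
    obtain ⟨hxs, hxlt⟩ := Finset.mem_filter.mp hx
    rw [Finset.mem_range]
    have h1 : (⟨x, hxs⟩ : {y // y ∈ s}) < s.orderIsoOfFin h j := by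
      rw [← Subtype.coe_lt_coe, Finset.coe_orderIsoOfFin_apply]
      exact hxlt
    have h2 := ((s.orderIsoOfFin h).symm.lt_iff_lt (x := (⟨x, hxs⟩ : {y // y ∈ s}))
      (y := s.orderIsoOfFin h j)).mpr h1
    rwa [OrderIso.symm_apply_apply] at h2
  · intro jv hj
    rw [Finset.mem_filter]
    refine ⟨Finset.orderEmbOfFin_mem s h _, ?_⟩
    exact (s.orderEmbOfFin h).strictMono (show (⟨jv, _⟩ : Fin m) < j from Finset.mem_range.mp hj)
  · intro x hx
    obtain ⟨hxs, hxlt⟩ := Finset.mem_filter.mp hx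
    show (s.orderEmbOfFin h) ((s.orderIsoOfFin h).symm ⟨x, hxs⟩) = x
    rw [← Finset.coe_orderIsoOfFin_apply, OrderIso.apply_symm_apply]
  · intro jv hj
    have hh := lt_trans (Finset.mem_range.mp hj) j.isLt
    have hmem : s.orderEmbOfFin h ⟨jv, hh⟩ ∈ s := Finset.orderEmbOfFin_mem s h _
    show (((s.orderIsoOfFin h).symm ⟨s.orderEmbOfFin h ⟨jv, hh⟩, hmem⟩ : Fin m) : ℕ) = jv
    have : (⟨s.orderEmbOfFin h ⟨jv, hh⟩, hmem⟩ : {y // y ∈ s}) = s.orderIsoOfFin h ⟨jv, hh⟩ :=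
      Subtype.ext (Finset.coe_orderIsoOfFin_apply s h _).symm
    rw [this, OrderIso.symm_apply_apply]

variable {n : ℕ}

def sSet (w : Fin ([n, n, n].sum) → Fin 3) (i : Fin 3) : Finset (Fin ([n, n, n].sum)) :=
  Finset.univ.filter (fun l => w l = i)

lemma sSet_card {w : Fin ([n, n, n].sum) → Fin 3} (hw : BWP n n n w) (i : Fin 3) :
    (sSet w i).card = n := by
  have hstab : (sSet w i).card = cnt w ([n, n, n].sum) i := by
    unfold sSet cnt
    congr 1
    apply Finset.filter_congr
    intro l _
    simp only [l.isLt, true_and]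
  rw [hstab]
  fin_cases i
  · exact hw.2.1
  · exact hw.2.2.1
  · exact hw.2.2.2

noncomputable def tab (w : Fin ([n, n, n].sum) → Fin 3) (hw : BWP n n n w) :
    cells [n, n, n] → Fin ([n, n, n].sum) :=
  fun p => (sSet w ⟨(p : ℕ × ℕ).1, row_lt3 p⟩).orderEmbOfFin
    (sSet_card hw _) ⟨(p : ℕ × ℕ).2, col_ltn p⟩

lemma w_emb {w : Fin ([n, n, n].sum) → Fin 3} (hw : BWP n n n w) (i : Fin 3) (j : Fin n) :
    w ((sSet w i).orderEmbOfFin (sSet_card hw i) j) = i := by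
  have := Finset.orderEmbOfFin_mem (sSet w i) (sSet_card hw i) j
  unfold sSet at this
  rw [Finset.mem_filter] at this
  exact this.2

lemma w_tab {w : Fin ([n, n, n].sum) → Fin 3} (hw : BWP n n n w) (p : cells [n, n, n]) :
    w (tab w hw p) = ⟨(p : ℕ × ℕ).1, row_lt3 p⟩ :=
  w_emb hw _ _

lemma cnt_emb {w : Fin ([n, n, n].sum) → Fin 3} (hw : BWP n n n w) (i : Fin 3) (j : Fin n) :
    cnt w (((sSet w i).orderEmbOfFin (sSet_card hw i) j : Fin ([n, n, n].sum)) : ℕ) i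
      = (j : ℕ) := by
  unfold cnt
  rw [← card_lt_emb ([n, n, n].sum) n (sSet w i) (sSet_card hw i) j]
  congr 1
  ext l
  simp only [Finset.mem_filter, Finset.mem_univ, true_and, sSet, Fin.lt_def]
  exact Finset.mem_filter.trans (by simp only [Finset.mem_univ, true_and, Fin.lt_def]; tauto)

lemma emb_lt_emb {w : Fin ([n, n, n].sum) → Fin 3} (hw : BWP n n n w) (i i' : Fin 3)
    (hball : ∀ k, cnt w k i' ≤ cnt w k i) (hne : i ≠ i') (j : Fin n) :
    (sSet w i).orderEmbOfFin (sSet_card hw i) j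
      < (sSet w i').orderEmbOfFin (sSet_card hw i') j := by
  set k' := (sSet w i').orderEmbOfFin (sSet_card hw i') j with hk'
  have h1 : cnt w (k' : ℕ) i' = (j : ℕ) := cnt_emb hw i' j
  have hwk' : w k' = i' := w_emb hw i' j
  have h2 : cnt w ((k' : ℕ) + 1) i' = (j : ℕ) + 1 := by
    rw [cnt_succ w k'.isLt]
    rw [show (⟨(k' : ℕ), k'.isLt⟩ : Fin ([n, n, n].sum)) = k' from rfl]
    rw [h1, if_pos hwk']
  have h3 : (j : ℕ) + 1 ≤ cnt w ((k' : ℕ) + 1) i := h2 ▸ hball ((k' : ℕ) + 1)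
  by_contra hnot
  push_neg at hnot
  -- every element of sSet w i below k'+1 is below emb_i j
  have hsub : Finset.univ.filter (fun l : Fin ([n, n, n].sum) => (l : ℕ) < (k' : ℕ) + 1 ∧ w l = i)
      ⊆ (sSet w i).filter (fun x => x < (sSet w i).orderEmbOfFin (sSet_card hw i) j) := by
    intro l hl
    simp only [Finset.mem_filter, Finset.mem_univ, true_and, sSet] at hl ⊢
    obtain ⟨hlt, hwl⟩ := hl
    have hlne : l ≠ k' := by
      intro hcontra
      rw [hcontra, hwk'] at hwl
      exact hne hwl.symm
    have : (l : ℕ) < (k' : ℕ) := by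
      rcases Nat.lt_succ_iff_lt_or_eq.mp hlt with h | h
      · exact h
      · exact absurd (Fin.ext h) hlne
    exact Finset.mem_filter.mpr ⟨Finset.mem_filter.mpr ⟨Finset.mem_univ _, hwl⟩, lt_of_lt_of_le (Fin.lt_def.mpr this) hnot⟩
  have hcard := Finset.card_le_card hsub
  rw [card_lt_emb] at hcard
  unfold cnt at h3
  omega

end PartA4

section PartA5

variable {n : ℕ}

lemma hball_all {w : Fin ([n, n, n].sum) → Fin 3} (hw : BWP n n n w)
    (i i' : Fin 3) (h : (i : ℕ) < (i' : ℕ)) : ∀ k, cnt w k i' ≤ cnt w k i := by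
  intro k
  fin_cases i <;> fin_cases i' <;> simp only [Fin.val_zero, Fin.val_one, Fin.val_two] at h
  all_goals first
    | omega
    | exact (hw.1 k).1
    | exact (hw.1 k).2
    | exact le_trans (hw.1 k).2 (hw.1 k).1

lemma tab_isSYT {w : Fin ([n, n, n].sum) → Fin 3} (hw : BWP n n n w) :
    IsSYT [n, n, n] (tab w hw) := by
  refine ⟨⟨?_, ?_⟩, ?_, ?_⟩
  · -- injective
    intro p p' heq
    have hwp := w_tab hw p
    have hwp' := w_tab hw p'
    rw [heq] at hwp
    rw [hwp'] at hwp
    -- hwp : ⟨row p', _⟩ = ⟨row p, _⟩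
    have hrow : (p' : ℕ × ℕ).1 = (p : ℕ × ℕ).1 := congrArg Fin.val hwp
    have hcnt1 : cnt w ((tab w hw p : Fin ([n, n, n].sum)) : ℕ) ⟨(p : ℕ × ℕ).1, row_lt3 p⟩
        = (p : ℕ × ℕ).2 := cnt_emb hw _ _
    have hcnt2 : cnt w ((tab w hw p' : Fin ([n, n, n].sum)) : ℕ) ⟨(p' : ℕ × ℕ).1, row_lt3 p'⟩
        = (p' : ℕ × ℕ).2 := cnt_emb hw _ _
    rw [← heq] at hcnt2
    rw [show (⟨(p' : ℕ × ℕ).1, row_lt3 p'⟩ : Fin 3) = ⟨(p : ℕ × ℕ).1, row_lt3 p⟩ from hwp] at hcnt2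
    have hcol : (p : ℕ × ℕ).2 = (p' : ℕ × ℕ).2 := by rw [← hcnt1, ← hcnt2]
    apply Subtype.ext
    exact Prod.ext hrow.symm hcol
  · -- surjective
    intro k
    have hk : k ∈ sSet w (w k) := by
      unfold sSet
      exact Finset.mem_filter.mpr ⟨Finset.mem_univ _, rfl⟩
    have hrange := Finset.range_orderEmbOfFin (sSet w (w k)) (sSet_card hw (w k))
    have : k ∈ Set.range ((sSet w (w k)).orderEmbOfFin (sSet_card hw (w k))) := by
      rw [hrange]
      exact_mod_cast hk
    obtain ⟨j, hj⟩ := this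
    refine ⟨⟨(((w k) : ℕ), (j : ℕ)), mem_cells'.mpr ⟨(w k).isLt, j.isLt⟩⟩, ?_⟩
    exact hj
  · -- rows increase
    intro p p' hrow hcol
    unfold tab
    have hr : (⟨(p : ℕ × ℕ).1, row_lt3 p⟩ : Fin 3) = ⟨(p' : ℕ × ℕ).1, row_lt3 p'⟩ :=
      Fin.ext hrow
    simp only [← hrow]
    exact ((sSet w ⟨(p : ℕ × ℕ).1, row_lt3 p⟩).orderEmbOfFin (sSet_card hw _)).strictMono
      (Fin.mk_lt_mk.mpr hcol)
  · -- columns increase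
    intro p p' hcol hrow
    unfold tab
    have hc : (⟨(p : ℕ × ℕ).2, col_ltn p⟩ : Fin n) = ⟨(p' : ℕ × ℕ).2, col_ltn p'⟩ :=
      Fin.ext hcol
    rw [hc]
    exact emb_lt_emb hw _ _ (hball_all hw _ _ hrow) (fun hcon => by
      have := congrArg Fin.val hcon
      simp only at this
      omega) _

lemma word_tab {w : Fin ([n, n, n].sum) → Fin 3} (hw : BWP n n n w) :
    word (tab w hw) (tab_isSYT hw) = w := by
  set e := Equiv.ofBijective (tab w hw) (tab_isSYT hw).1 with he
  funext k
  apply Fin.ext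
  have h := w_tab hw (e.symm k)
  have hk : tab w hw (e.symm k) = k := e.apply_symm_apply k
  rw [hk] at h
  show ((e.symm k : cells [n, n, n]) : ℕ × ℕ).1 = (w k : ℕ)
  rw [h]

set_option maxHeartbeats 1000000 in
/-- Part A main result -/
lemma card_syt_eq_card_BW :
    Nat.card {f : cells [n, n, n] → Fin ([n, n, n].sum) // IsSYT [n, n, n] f}
      = Nat.card (BW ([n, n, n].sum) n n n) := by
  apply Nat.card_eq_of_bijective
    (fun x => (⟨word x.1 x.2, word_isBallot x.1 x.2,
      word_count x.1 x.2 0, word_count x.1 x.2 1, word_count x.1 x.2 2⟩ : BW _ n n n))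
  constructor
  · rintro ⟨f, hf⟩ ⟨g, hg⟩ h
    have h' : word f hf = word g hg := congrArg Subtype.val h
    exact Subtype.ext (word_injective f g hf hg h')
  · rintro ⟨w, hw⟩
    refine ⟨⟨tab w hw, tab_isSYT hw⟩, ?_⟩
    apply Subtype.ext
    exact word_tab hw

end PartA5

theorem main_count (n : ℕ) :
    Nat.card {f : cells [n, n, n] → Fin ([n, n, n].sum) // IsSYT [n, n, n] f}
      = 2 * Nat.factorial (3 * n) /
        (Nat.factorial n * Nat.factorial (n + 1) * Nat.factorial (n + 2)) := by
  rw [card_syt_eq_card_BW, card_BW_eq_W msum_eq]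
  have h3 := W_formula (n + n + n) n n n rfl le_rfl le_rfl
  rw [Nat.sub_self] at h3
  have hD : 0 < Nat.factorial n * Nat.factorial (n + 1) * Nat.factorial (n + 2) := by
    positivity
  have key : 2 * Nat.factorial (3 * n)
      = W n n n * (Nat.factorial n * Nat.factorial (n + 1) * Nat.factorial (n + 2)) := by
    have h33 : 3 * n = n + n + n := by ring
    rw [h33]
    ring_nf
    ring_nf at h3
    linarith
  rw [key, Nat.mul_div_cancel _ hD]

end SYT3









/-- The number of standard Young tableaux of shape (n,n,n) equals
`2·(3n)!/(n!·(n+1)!·(n+2)!)`. -/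
theorem syt_three_row_eq_3dCatalan (n : ℕ) :
    sytCount [n, n, n] =
      2 * Nat.factorial (3 * n) /
        (Nat.factorial n * Nat.factorial (n + 1) * Nat.factorial (n + 2)) :=
  SYT3.main_count n
end

section
/- The number of lattice paths from (0,0,0) to (n,n,n) using unit steps in the positive coordinate directions, such that every visited point (x,y,z) satisfies x ≥ y ≥ z, equals 2·(3n)!/(n!·(n+1)!·(n+2)!). -/
/-- For a word `w` of steps (each step increasing one of `d` coordinates by 1),
`cnt w i j` is the value of coordinate `j` after the first `i` steps, i.e. the
number of steps among the first `i` that increase coordinate `j`. -/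
def cnt {m d : ℕ} (w : Fin m → Fin d) (i : ℕ) (j : Fin d) : ℕ :=
  (Finset.univ.filter (fun t : Fin m => (t : ℕ) < i ∧ w t = j)).card

lemma cnt_zero {m d : ℕ} (w : Fin m → Fin d) (j : Fin d) : cnt w 0 j = 0 := by
  simp [cnt]

lemma cnt_succ {m d : ℕ} (w : Fin m → Fin d) (i : ℕ) (hi : i < m) (j : Fin d) :
    cnt w (i+1) j = cnt w i j + (if w ⟨i, hi⟩ = j then 1 else 0) := by
  classical
  unfold cnt
  have hsplit : (Finset.univ.filter (fun t : Fin m => (t : ℕ) < i + 1 ∧ w t = j)) =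
      (Finset.univ.filter (fun t : Fin m => (t : ℕ) < i ∧ w t = j)) ∪
      (Finset.univ.filter (fun t : Fin m => t = ⟨i, hi⟩ ∧ w t = j)) := by
    ext t
    simp only [Finset.mem_filter, Finset.mem_union, Finset.mem_univ, true_and]
    constructor
    · rintro ⟨ht, hw⟩
      rcases Nat.lt_succ_iff_lt_or_eq.1 ht with h | h
      · exact Or.inl ⟨h, hw⟩
      · exact Or.inr ⟨Fin.ext h, hw⟩
    · rintro (⟨ht, hw⟩ | ⟨ht, hw⟩)
      · exact ⟨Nat.lt_succ_of_lt ht, hw⟩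
      · exact ⟨by rw [ht]; exact Nat.lt_succ_self i, hw⟩
  rw [hsplit, Finset.card_union_of_disjoint]
  · congr 1
    by_cases h : w ⟨i, hi⟩ = j
    · simp only [h, if_true]
      rw [Finset.card_eq_one]
      refine ⟨⟨i, hi⟩, ?_⟩
      ext t
      simp only [Finset.mem_filter, Finset.mem_univ, true_and, Finset.mem_singleton]
      constructor
      · rintro ⟨rfl, _⟩; rfl
      · rintro rfl; exact ⟨rfl, h⟩
    · simp only [h, if_false]
      rw [Finset.card_eq_zero]
      ext t
      simp only [Finset.mem_filter, Finset.mem_univ, true_and, Finset.notMem_empty, iff_false]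
      rintro ⟨rfl, hw⟩; exact h hw
  · rw [Finset.disjoint_filter]
    rintro t _ ⟨ht, _⟩ ⟨rfl, _⟩
    exact absurd ht (by simp)

lemma cnt_stable {m d : ℕ} (w : Fin m → Fin d) {i : ℕ} (h : m ≤ i) (j : Fin d) :
    cnt w i j = cnt w m j := by
  unfold cnt
  congr 1
  ext t
  simp [t.isLt, lt_of_lt_of_le t.isLt h]

lemma cnt_comp_castSucc {m d : ℕ} (w : Fin (m+1) → Fin d) {i : ℕ} (h : i ≤ m) (j : Fin d) :
    cnt (w ∘ Fin.castSucc) i j = cnt w i j := by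
  induction i with
  | zero => simp [cnt_zero]
  | succ i ih =>
    have hi : i < m := h
    rw [cnt_succ _ i hi j, cnt_succ w i (Nat.lt_succ_of_lt hi) j, ih (le_of_lt hi)]
    congr 2

lemma cnt_sum_three {m : ℕ} (w : Fin m → Fin 3) :
    cnt w m 0 + cnt w m 1 + cnt w m 2 = m := by
  classical
  have h1 : ∀ j : Fin 3, cnt w m j = (Finset.univ.filter (fun t : Fin m => w t = j)).card := by
    intro j; unfold cnt; congr 1; ext t; simp [t.isLt]
  have h2 := Finset.card_eq_sum_card_fiberwise
    (f := w) (s := Finset.univ) (t := Finset.univ) (fun x _ => Finset.mem_univ _)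
  simp only [Finset.card_univ, Fintype.card_fin] at h2
  rw [Fin.sum_univ_three] at h2
  rw [h1 0, h1 1, h1 2]
  omega

def Valid {m : ℕ} (w : Fin m → Fin 3) : Prop :=
  ∀ i : ℕ, cnt w i 1 ≤ cnt w i 0 ∧ cnt w i 2 ≤ cnt w i 1

noncomputable def N (m a b c : ℕ) : ℕ :=
  Nat.card {w : Fin m → Fin 3 // Valid w ∧ cnt w m 0 = a ∧ cnt w m 1 = b ∧ cnt w m 2 = c}

lemma snoc_comp_castSucc {m : ℕ} (w' : Fin m → Fin 3) (j0 : Fin 3) :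
    (Fin.snoc w' j0 : Fin (m+1) → Fin 3) ∘ Fin.castSucc = w' := by
  funext t; simp [Fin.snoc_castSucc]

lemma cnt_snoc_lt {m : ℕ} (w' : Fin m → Fin 3) (j0 : Fin 3) {i : ℕ} (h : i ≤ m) (j : Fin 3) :
    cnt (Fin.snoc w' j0 : Fin (m+1) → Fin 3) i j = cnt w' i j := by
  rw [← cnt_comp_castSucc _ h, snoc_comp_castSucc]

lemma cnt_snoc_top {m : ℕ} (w' : Fin m → Fin 3) (j0 : Fin 3) (j : Fin 3) :
    cnt (Fin.snoc w' j0 : Fin (m+1) → Fin 3) (m+1) j = cnt w' m j + if j0 = j then 1 else 0 := by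
  rw [cnt_succ _ m (Nat.lt_succ_self m) j, cnt_snoc_lt _ _ (le_refl m)]
  have h : (⟨m, Nat.lt_succ_self m⟩ : Fin (m+1)) = Fin.last m := rfl
  rw [h, Fin.snoc_last]

lemma cnt_restrict_top {m : ℕ} (w : Fin (m+1) → Fin 3) (j : Fin 3) :
    cnt w (m+1) j = cnt (w ∘ Fin.castSucc) m j + if w (Fin.last m) = j then 1 else 0 := by
  rw [cnt_succ w m (Nat.lt_succ_self m) j, cnt_comp_castSucc _ (le_refl m)]
  rfl

lemma valid_restrict {m : ℕ} {w : Fin (m+1) → Fin 3} (hv : Valid w) :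
    Valid (w ∘ Fin.castSucc) := by
  intro i
  rcases le_or_gt i m with h | h
  · rw [cnt_comp_castSucc _ h, cnt_comp_castSucc _ h, cnt_comp_castSucc _ h]
    exact hv i
  · rw [cnt_stable _ h.le, cnt_stable _ h.le, cnt_stable _ h.le,
      cnt_comp_castSucc _ (le_refl m), cnt_comp_castSucc _ (le_refl m),
      cnt_comp_castSucc _ (le_refl m)]
    exact hv m

lemma valid_snoc {m : ℕ} {w' : Fin m → Fin 3} (hv : Valid w') (j0 : Fin 3)
    (h1 : cnt (Fin.snoc w' j0 : Fin (m+1) → Fin 3) (m+1) 1 ≤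
          cnt (Fin.snoc w' j0 : Fin (m+1) → Fin 3) (m+1) 0)
    (h2 : cnt (Fin.snoc w' j0 : Fin (m+1) → Fin 3) (m+1) 2 ≤
          cnt (Fin.snoc w' j0 : Fin (m+1) → Fin 3) (m+1) 1) :
    Valid (Fin.snoc w' j0 : Fin (m+1) → Fin 3) := by
  intro i
  rcases le_or_gt i m with h | h
  · rw [cnt_snoc_lt _ _ h, cnt_snoc_lt _ _ h, cnt_snoc_lt _ _ h]
    exact hv i
  · have h' : m + 1 ≤ i := h
    rw [cnt_stable _ h', cnt_stable _ h', cnt_stable _ h']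
    exact ⟨h1, h2⟩

lemma card_eq_sum_fibers {α : Type*} [Finite α] (f : α → Fin 3) :
    Nat.card α = ∑ j : Fin 3, Nat.card {x : α // f x = j} := by
  classical
  cases nonempty_fintype α
  simp only [Nat.card_eq_fintype_card]
  rw [← Fintype.card_congr (Equiv.sigmaFiberEquiv f), Fintype.card_sigma]

lemma card_fiber (m : ℕ) (j0 : Fin 3) (a b c : ℕ) (hb : b ≤ a) (hc : c ≤ b)
    (a' b' c' : ℕ) (ha : a = a' + if j0 = 0 then 1 else 0)
    (hbb : b = b' + if j0 = 1 then 1 else 0) (hcc : c = c' + if j0 = 2 then 1 else 0) :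
    Nat.card {w : Fin (m+1) → Fin 3 //
      (Valid w ∧ cnt w (m+1) 0 = a ∧ cnt w (m+1) 1 = b ∧ cnt w (m+1) 2 = c) ∧
        w (Fin.last m) = j0} = N m a' b' c' := by
  apply Nat.card_congr
  refine { toFun := fun x => ⟨x.1 ∘ Fin.castSucc, ?_⟩,
           invFun := fun y => ⟨Fin.snoc y.1 j0, ?_⟩, left_inv := ?_, right_inv := ?_ }
  · obtain ⟨w, ⟨⟨hv, h0, h1, h2⟩, hl⟩⟩ := x
    dsimp only
    refine ⟨valid_restrict hv, ?_, ?_, ?_⟩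
    · have := cnt_restrict_top w 0; rw [h0, hl] at this; omega
    · have := cnt_restrict_top w 1; rw [h1, hl] at this; omega
    · have := cnt_restrict_top w 2; rw [h2, hl] at this; omega
  · obtain ⟨w', hv', k0, k1, k2⟩ := y
    have t0 := cnt_snoc_top w' j0 0
    have t1 := cnt_snoc_top w' j0 1
    have t2 := cnt_snoc_top w' j0 2
    rw [k0] at t0; rw [k1] at t1; rw [k2] at t2
    have e0 : cnt (Fin.snoc w' j0 : Fin (m+1) → Fin 3) (m+1) 0 = a := by omega
    have e1 : cnt (Fin.snoc w' j0 : Fin (m+1) → Fin 3) (m+1) 1 = b := by omega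
    have e2 : cnt (Fin.snoc w' j0 : Fin (m+1) → Fin 3) (m+1) 2 = c := by omega
    refine ⟨⟨valid_snoc hv' j0 ?_ ?_, e0, e1, e2⟩, Fin.snoc_last _ _⟩
    · rw [e0, e1]; exact hb
    · rw [e1, e2]; exact hc
  · rintro ⟨w, ⟨_, hl⟩⟩
    apply Subtype.ext
    show Fin.snoc (w ∘ Fin.castSucc) j0 = w
    rw [← hl]
    exact Fin.snoc_init_self w
  · rintro ⟨w', _⟩
    apply Subtype.ext
    exact snoc_comp_castSucc w' j0

lemma card_fiber_zero (m : ℕ) (j0 : Fin 3) (a b c : ℕ)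
    (hz : (![a, b, c] : Fin 3 → ℕ) j0 = 0) :
    Nat.card {w : Fin (m+1) → Fin 3 //
      (Valid w ∧ cnt w (m+1) 0 = a ∧ cnt w (m+1) 1 = b ∧ cnt w (m+1) 2 = c) ∧
        w (Fin.last m) = j0} = 0 := by
  rw [Nat.card_eq_zero]
  left
  constructor
  rintro ⟨w, ⟨⟨hv, h0, h1, h2⟩, hl⟩⟩
  have key : cnt w (m+1) j0 = (![a, b, c] : Fin 3 → ℕ) j0 := by
    fin_cases j0 <;> simpa using by first | exact h0 | exact h1 | exact h2
  have := cnt_restrict_top w j0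
  rw [hl, if_pos rfl, key, hz] at this
  omega

lemma N_succ (m a b c : ℕ) :
    N (m+1) a b c =
      Nat.card {w : Fin (m+1) → Fin 3 //
        (Valid w ∧ cnt w (m+1) 0 = a ∧ cnt w (m+1) 1 = b ∧ cnt w (m+1) 2 = c) ∧
          w (Fin.last m) = 0} +
      Nat.card {w : Fin (m+1) → Fin 3 //
        (Valid w ∧ cnt w (m+1) 0 = a ∧ cnt w (m+1) 1 = b ∧ cnt w (m+1) 2 = c) ∧
          w (Fin.last m) = 1} +
      Nat.card {w : Fin (m+1) → Fin 3 //
        (Valid w ∧ cnt w (m+1) 0 = a ∧ cnt w (m+1) 1 = b ∧ cnt w (m+1) 2 = c) ∧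
          w (Fin.last m) = 2} := by
  unfold N
  have E : ∀ (p : (Fin (m+1) → Fin 3) → Prop) (j : Fin 3),
      Nat.card {x : {w : Fin (m+1) → Fin 3 // p w} // x.1 (Fin.last m) = j} =
      Nat.card {w : Fin (m+1) → Fin 3 // p w ∧ w (Fin.last m) = j} :=
    fun p j => Nat.card_congr (Equiv.subtypeSubtypeEquivSubtypeInter p (fun w => w (Fin.last m) = j))
  rw [card_eq_sum_fibers (fun x => x.1 (Fin.last m)), Fin.sum_univ_three, E _ 0, E _ 1, E _ 2]

noncomputable def fq (a b c : ℕ) : ℚ :=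
  (Nat.factorial (a+b+c) : ℚ) * ((a:ℚ) - b + 1) * ((b:ℚ) - c + 1) * ((a:ℚ) - c + 2) /
    ((Nat.factorial (a+2) : ℚ) * (Nat.factorial (b+1)) * (Nat.factorial c))

lemma fact_cast_ne (k : ℕ) : ((Nat.factorial k : ℕ) : ℚ) ≠ 0 :=
  Nat.cast_ne_zero.mpr (Nat.factorial_ne_zero k)

lemma fact_succ_cast (k : ℕ) : ((Nat.factorial (k+1) : ℕ) : ℚ) = (k+1) * Nat.factorial k := by
  rw [Nat.factorial_succ]; push_cast; ring

lemma alg1 (A B C : ℕ) :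
    fq (A+1) (B+1) (C+1) = fq A (B+1) (C+1) + fq (A+1) B (C+1) + fq (A+1) (B+1) C := by
  unfold fq
  have e1 : A+1+(B+1)+(C+1) = (A+B+C+2)+1 := by ring
  have e2 : A+(B+1)+(C+1) = A+B+C+2 := by ring
  have e3 : A+1+B+(C+1) = A+B+C+2 := by ring
  have e4 : A+1+(B+1)+C = A+B+C+2 := by ring
  rw [e1, e2, e3, e4]
  have f1 : ((Nat.factorial (A+B+C+2+1) : ℕ) : ℚ) = (A+B+C+3) * Nat.factorial (A+B+C+2) := by
    rw [fact_succ_cast]; push_cast; ring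
  have f2 : ((Nat.factorial (A+1+2) : ℕ) : ℚ) = (A+3) * Nat.factorial (A+2) := by
    rw [show A+1+2 = (A+2)+1 from rfl, fact_succ_cast]; push_cast; ring
  have f3 : ((Nat.factorial (B+1+1) : ℕ) : ℚ) = (B+2) * Nat.factorial (B+1) := by
    rw [fact_succ_cast]; push_cast; ring
  have f4 : ((Nat.factorial (C+1) : ℕ) : ℚ) = (C+1) * Nat.factorial C := by
    rw [fact_succ_cast]
  rw [f1, f2, f3, f4]
  have n1 := fact_cast_ne (A+B+C+2)
  have n2 := fact_cast_ne (A+2)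
  have n3 := fact_cast_ne (B+1)
  have n4 := fact_cast_ne C
  field_simp
  push_cast
  ring

lemma alg2 (A B : ℕ) : fq (A+1) (B+1) 0 = fq A (B+1) 0 + fq (A+1) B 0 := by
  unfold fq
  have e1 : A+1+(B+1)+0 = (A+B+1)+1 := by ring
  have e2 : A+(B+1)+0 = A+B+1 := by ring
  have e3 : A+1+B+0 = A+B+1 := by ring
  rw [e1, e2, e3]
  have f1 : ((Nat.factorial (A+B+1+1) : ℕ) : ℚ) = (A+B+2) * Nat.factorial (A+B+1) := by
    rw [fact_succ_cast]; push_cast; ring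
  have f2 : ((Nat.factorial (A+1+2) : ℕ) : ℚ) = (A+3) * Nat.factorial (A+2) := by
    rw [show A+1+2 = (A+2)+1 from rfl, fact_succ_cast]; push_cast; ring
  have f3 : ((Nat.factorial (B+1+1) : ℕ) : ℚ) = (B+2) * Nat.factorial (B+1) := by
    rw [fact_succ_cast]; push_cast; ring
  rw [f1, f2, f3]
  have n1 := fact_cast_ne (A+B+1)
  have n2 := fact_cast_ne (A+2)
  have n3 := fact_cast_ne (B+1)
  field_simp [Nat.factorial]
  push_cast
  ring

lemma alg3 (A : ℕ) : fq (A+1) 0 0 = fq A 0 0 := by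
  unfold fq
  have e1 : A+1+0+0 = A+1 := by ring
  have e2 : A+0+0 = A := by ring
  rw [e1, e2]
  have f1 : ((Nat.factorial (A+1) : ℕ) : ℚ) = (A+1) * Nat.factorial A := fact_succ_cast A
  have f2 : ((Nat.factorial (A+1+2) : ℕ) : ℚ) = (A+3) * Nat.factorial (A+2) := by
    rw [show A+1+2 = (A+2)+1 from rfl, fact_succ_cast]; push_cast; ring
  have f3 : ((Nat.factorial (A+2) : ℕ) : ℚ) = (A+2)*(A+1) * Nat.factorial A := by
    rw [show A+2 = (A+1)+1 from rfl, fact_succ_cast, fact_succ_cast]; push_cast; ring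
  rw [f1, f2, f3]
  have n1 := fact_cast_ne A
  field_simp [Nat.factorial]
  push_cast
  ring

lemma fq_zero_left (a c : ℕ) : fq a (a+1) c = 0 := by
  unfold fq
  have : ((a:ℚ) - (a+1:ℕ) + 1) = 0 := by push_cast; ring
  rw [this]
  ring_nf

lemma fq_zero_mid (a b : ℕ) : fq a b (b+1) = 0 := by
  unfold fq
  have : ((b:ℚ) - (b+1:ℕ) + 1) = 0 := by push_cast; ring
  rw [this]
  ring_nf

lemma fq_zero_zero : fq 0 0 0 = 1 := by
  unfold fq
  norm_num [Nat.factorial]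

lemma fq_nnn (n : ℕ) : fq n n n = 2 * Nat.factorial (3*n) /
    ((Nat.factorial n) * (Nat.factorial (n+1)) * (Nat.factorial (n+2))) := by
  unfold fq
  have e : n+n+n = 3*n := by ring
  rw [e]
  ring_nf

lemma N_eq_zero_of_not {m a b c : ℕ} (h : ¬(a + b + c = m ∧ b ≤ a ∧ c ≤ b)) :
    N m a b c = 0 := by
  unfold N
  rw [Nat.card_eq_zero]
  left
  constructor
  rintro ⟨w, hv, h0, h1, h2⟩
  have hs := cnt_sum_three w
  obtain ⟨hA, hB⟩ := hv m
  exact h (by omega)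

lemma N_base : N 0 0 0 0 = 1 := by
  unfold N
  have hcnt : ∀ (w : Fin 0 → Fin 3) (i : ℕ) (j : Fin 3), cnt w i j = 0 := by
    intro w i j
    simp [cnt]
  rw [Nat.card_eq_one_iff_exists]
  refine ⟨⟨Fin.elim0, fun i => by simp [hcnt], hcnt _ _ _, hcnt _ _ _, hcnt _ _ _⟩, ?_⟩
  rintro ⟨w, _⟩
  apply Subtype.ext
  funext t
  exact t.elim0

lemma main_induction (m : ℕ) :
    ∀ a b c : ℕ, a + b + c = m → b ≤ a → c ≤ b → (N m a b c : ℚ) = fq a b c := by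
  induction m with
  | zero =>
    intro a b c hsum hba hcb
    obtain ⟨rfl, rfl, rfl⟩ : a = 0 ∧ b = 0 ∧ c = 0 := by omega
    rw [N_base, fq_zero_zero]
    norm_num
  | succ m IH =>
    -- helper lemmas with "edge" cases
    have IH0 : ∀ a b c : ℕ, a + b + c = m → b ≤ a + 1 → c ≤ b → (N m a b c : ℚ) = fq a b c := by
      intro a b c hsum hba hcb
      rcases le_or_gt b a with h | h
      · exact IH a b c hsum h hcb
      · have hb : b = a + 1 := by omega
        subst hb
        rw [N_eq_zero_of_not (by omega), fq_zero_left]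
        norm_num
    have IH1 : ∀ a b c : ℕ, a + b + c = m → b ≤ a → c ≤ b + 1 → (N m a b c : ℚ) = fq a b c := by
      intro a b c hsum hba hcb
      rcases le_or_gt c b with h | h
      · exact IH a b c hsum hba h
      · have hc : c = b + 1 := by omega
        subst hc
        rw [N_eq_zero_of_not (by omega), fq_zero_mid]
        norm_num
    intro a b c hsum hba hcb
    obtain ⟨A, rfl⟩ : ∃ A, a = A + 1 := ⟨a - 1, by omega⟩
    rcases Nat.eq_zero_or_pos c with rfl | hc
    · rcases Nat.eq_zero_or_pos b with rfl | hbpos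
      · -- b = 0, c = 0
        rw [N_succ, card_fiber m 0 (A+1) 0 0 hba hcb A 0 0 (by simp) (by simp)
            (by simp), card_fiber_zero m 1 (A+1) 0 0 (by simp),
            card_fiber_zero m 2 (A+1) 0 0 (by simp)]
        push_cast
        rw [IH A 0 0 (by omega) (by omega) (by omega)]
        rw [alg3]
        try ring
      · -- b = B + 1, c = 0
        obtain ⟨B, rfl⟩ : ∃ B, b = B + 1 := ⟨b - 1, by omega⟩
        rw [N_succ, card_fiber m 0 (A+1) (B+1) 0 hba hcb A (B+1) 0 (by simp) (by simp)
            (by simp),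
          card_fiber m 1 (A+1) (B+1) 0 hba hcb (A+1) B 0 (by simp) (by simp)
            (by simp),
          card_fiber_zero m 2 (A+1) (B+1) 0 (by simp)]
        push_cast
        rw [IH0 A (B+1) 0 (by omega) (by omega) (by omega)]
        rw [IH1 (A+1) B 0 (by omega) (by omega) (by omega)]
        rw [alg2]
        try ring
    · -- c = C + 1 (so b, a ≥ 1)
      obtain ⟨C, rfl⟩ : ∃ C, c = C + 1 := ⟨c - 1, by omega⟩
      obtain ⟨B, rfl⟩ : ∃ B, b = B + 1 := ⟨b - 1, by omega⟩
      rw [N_succ, card_fiber m 0 (A+1) (B+1) (C+1) hba hcb A (B+1) (C+1) (by simp)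
          (by simp) (by simp),
        card_fiber m 1 (A+1) (B+1) (C+1) hba hcb (A+1) B (C+1) (by simp) (by simp)
          (by simp),
        card_fiber m 2 (A+1) (B+1) (C+1) hba hcb (A+1) (B+1) C (by simp) (by simp)
          (by simp)]
      push_cast
      rw [IH0 A (B+1) (C+1) (by omega) (by omega) (by omega)]
      rw [IH1 (A+1) B (C+1) (by omega) (by omega) (by omega)]
      rw [IH (A+1) (B+1) C (by omega) (by omega) (by omega)]
      rw [alg1]
      try ring

/-- The number of lattice paths from `(0,0,0)` to `(n,n,n)` with positive unit
steps such that every visited point `(x,y,z)` satisfies `x ≥ y ≥ z` equals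
`2·(3n)!/(n!·(n+1)!·(n+2)!)`. -/
theorem lattice_paths_3d_catalan (n : ℕ) :
    Nat.card {w : Fin (3 * n) → Fin 3 //
        (∀ i : ℕ, cnt w i 1 ≤ cnt w i 0 ∧ cnt w i 2 ≤ cnt w i 1) ∧
        (∀ j : Fin 3, cnt w (3 * n) j = n)} =
      2 * Nat.factorial (3 * n) /
        (Nat.factorial n * Nat.factorial (n + 1) * Nat.factorial (n + 2)) := by
  have h1 : Nat.card {w : Fin (3 * n) → Fin 3 //
        (∀ i : ℕ, cnt w i 1 ≤ cnt w i 0 ∧ cnt w i 2 ≤ cnt w i 1) ∧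
        (∀ j : Fin 3, cnt w (3 * n) j = n)} = N (3 * n) n n n := by
    unfold N
    apply Nat.card_congr
    apply Equiv.subtypeEquivRight
    intro w
    constructor
    · rintro ⟨hv, hj⟩
      exact ⟨hv, hj 0, hj 1, hj 2⟩
    · rintro ⟨hv, e0, e1, e2⟩
      exact ⟨hv, fun j => by fin_cases j <;> assumption⟩
  have hq : (N (3 * n) n n n : ℚ) = 2 * Nat.factorial (3 * n) /
      ((Nat.factorial n : ℚ) * (Nat.factorial (n + 1)) * (Nat.factorial (n + 2))) := by
    rw [main_induction (3 * n) n n n (by ring) le_rfl le_rfl, fq_nnn]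
  have hD : ((Nat.factorial n : ℚ) * (Nat.factorial (n + 1)) * (Nat.factorial (n + 2))) ≠ 0 :=
    mul_ne_zero (mul_ne_zero (fact_cast_ne n) (fact_cast_ne (n + 1))) (fact_cast_ne (n + 2))
  rw [eq_div_iff hD] at hq
  have key : 2 * Nat.factorial (3 * n) =
      N (3 * n) n n n * (Nat.factorial n * Nat.factorial (n + 1) * Nat.factorial (n + 2)) := by
    exact_mod_cast hq.symm
  have hpos : 0 < Nat.factorial n * Nat.factorial (n + 1) * Nat.factorial (n + 2) :=
    Nat.mul_pos (Nat.mul_pos (Nat.factorial_pos n) (Nat.factorial_pos (n + 1)))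
      (Nat.factorial_pos (n + 2))
  rw [h1]
  exact (Nat.div_eq_of_eq_mul_left hpos key).symm
end

section
/- The number of solid standard Young tableaux of the cylindrical shape (2,1)×{1,...,n} (i.e., the down-closed subset {(i,j,k) : (i,j) ∈ diagram of (2,1), 0 ≤ k < n} of ℕ³) equals the number of lattice paths from (0,0,0) to (n,n,n) in ℤ³ using positive unit steps such that every visited point (x₁,x₂,x₃) satisfies x₁ ≥ x₂ and x₁ ≥ x₃. -/
/-- A solid (3D) shape: a finite down-closed subset of `ℕ³`. -/
def DownClosed (S : Finset (ℕ × ℕ × ℕ)) : Prop :=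
  ∀ a ∈ S, ∀ b : ℕ × ℕ × ℕ, b.1 ≤ a.1 → b.2.1 ≤ a.2.1 → b.2.2 ≤ a.2.2 → b ∈ S

/-- A corner of a solid shape: a box none of whose three forward neighbors is in `S`. -/
def IsCorner3 (S : Finset (ℕ × ℕ × ℕ)) (c : ℕ × ℕ × ℕ) : Prop :=
  c ∈ S ∧ (c.1 + 1, c.2.1, c.2.2) ∉ S ∧ (c.1, c.2.1 + 1, c.2.2) ∉ S ∧
    (c.1, c.2.1, c.2.2 + 1) ∉ S

/-- `f` is a solid standard Young tableau of shape `S`: a bijection from the boxes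
of `S` to `{1,…,|S|}` (modeled as `Fin S.card`), strictly increasing in each of the
three coordinate directions. -/
def IsSSYT3 (S : Finset (ℕ × ℕ × ℕ)) (f : S → Fin S.card) : Prop :=
  Function.Bijective f ∧
  (∀ a b : S, (↑a : ℕ × ℕ × ℕ).2 = (↑b : ℕ × ℕ × ℕ).2 →
      (↑a : ℕ × ℕ × ℕ).1 < (↑b : ℕ × ℕ × ℕ).1 → f a < f b) ∧
  (∀ a b : S, (↑a : ℕ × ℕ × ℕ).1 = (↑b : ℕ × ℕ × ℕ).1 →
      (↑a : ℕ × ℕ × ℕ).2.2 = (↑b : ℕ × ℕ × ℕ).2.2 →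
      (↑a : ℕ × ℕ × ℕ).2.1 < (↑b : ℕ × ℕ × ℕ).2.1 → f a < f b) ∧
  (∀ a b : S, (↑a : ℕ × ℕ × ℕ).1 = (↑b : ℕ × ℕ × ℕ).1 →
      (↑a : ℕ × ℕ × ℕ).2.1 = (↑b : ℕ × ℕ × ℕ).2.1 →
      (↑a : ℕ × ℕ × ℕ).2.2 < (↑b : ℕ × ℕ × ℕ).2.2 → f a < f b)

/-- The number of solid standard Young tableaux of shape `S`. -/
noncomputable def ssyt3Count (S : Finset (ℕ × ℕ × ℕ)) : ℕ :=
  Nat.card {f : S → Fin S.card // IsSSYT3 S f}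

/-- The cylindrical shape `(2,1) × {1,…,n}`: boxes `(i,j,k)` with `(i,j)` in
the diagram `{(0,0),(0,1),(1,0)}` of the partition `(2,1)` and `k < n`. -/
def cylShape21 (n : ℕ) : Finset (ℕ × ℕ × ℕ) :=
  (Finset.range 2 ×ˢ Finset.range 2 ×ˢ Finset.range n).filter
    (fun p => (p.1, p.2.1) ∈ ({(0, 0), (0, 1), (1, 0)} : Finset (ℕ × ℕ)))

namespace SSYTAux

/-- Column of a box: `(0,0) ↦ 0`, `(0,1) ↦ 1`, `(1,0) ↦ 2`. -/
def col (p : ℕ × ℕ × ℕ) : Fin 3 :=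
  if p.1 = 0 then (if p.2.1 = 0 then 0 else 1) else 2

/-- The box of column `c`, level `k`. -/
def box (c : Fin 3) (k : ℕ) : ℕ × ℕ × ℕ :=
  if c = 0 then (0, 0, k) else if c = 1 then (0, 1, k) else (1, 0, k)

@[simp] lemma col_box (c : Fin 3) (k : ℕ) : col (box c k) = c := by
  fin_cases c <;> simp [col, box]

@[simp] lemma box_k (c : Fin 3) (k : ℕ) : (box c k).2.2 = k := by
  fin_cases c <;> simp [box]

lemma box_injective : Function.Injective (fun q : Fin 3 × ℕ => box q.1 q.2) := by
  rintro ⟨c, k⟩ ⟨c', k'⟩ h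
  simp only at h
  have h1 : col (box c k) = col (box c' k') := by rw [h]
  have h2 : (box c k).2.2 = (box c' k').2.2 := by rw [h]
  simp at h1 h2; exact Prod.ext h1 h2


lemma mem_cyl {n : ℕ} {p : ℕ × ℕ × ℕ} :
    p ∈ cylShape21 n ↔ p.2.2 < n ∧ p = box (col p) p.2.2 := by
  obtain ⟨a, b, k⟩ := p
  simp only [cylShape21, Finset.mem_filter, Finset.mem_product, Finset.mem_range,
    Finset.mem_insert, Finset.mem_singleton, Prod.mk.injEq]
  constructor
  · rintro ⟨⟨ha, hb, hk⟩, h | h | h⟩ <;>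
      · obtain ⟨h1, h2⟩ := h; subst h1; subst h2; simp [col, box, hk]
  · rintro ⟨hk, hp⟩
    by_cases ha : a = 0
    · by_cases hb : b = 0
      · subst ha; subst hb; simp [hk]
      · have : (a, b, k) = (0, 1, k) := by simpa [col, box, ha, hb] using hp
        simp at this; simp [this.1, this.2, hk, ha]
    · have : (a, b, k) = (1, 0, k) := by simpa [col, box, ha] using hp
      simp at this; simp [this.1, this.2, hk]


lemma box_mem {n : ℕ} {c : Fin 3} {k : ℕ} : box c k ∈ cylShape21 n ↔ k < n := by
  rw [mem_cyl]; simp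

lemma cyl_eq_image (n : ℕ) :
    cylShape21 n =
      ((Finset.univ : Finset (Fin 3)) ×ˢ Finset.range n).image (fun q => box q.1 q.2) := by
  ext p
  simp only [Finset.mem_image, Finset.mem_product, Finset.mem_univ, Finset.mem_range, true_and,
    Prod.exists, mem_cyl]
  constructor
  · rintro ⟨hk, hp⟩; exact ⟨col p, p.2.2, hk, hp.symm⟩
  · rintro ⟨c, k, hk, rfl⟩; simp [hk]

lemma card_cyl (n : ℕ) : (cylShape21 n).card = 3 * n := by
  rw [cyl_eq_image, Finset.card_image_of_injective _ box_injective]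
  simp [mul_comm]

/-- If at least `k+1` elements of `s` are `≤ t`, then the `k`-th element of `s` is `≤ t`. -/
lemma orderEmbOfFin_le_of_card {α : Type*} [LinearOrder α] {s : Finset α} {m : ℕ}
    (h : s.card = m) (k : Fin m) (t : α)
    (hcard : k + 1 ≤ (s.filter (fun x => x ≤ t)).card) :
    s.orderEmbOfFin h k ≤ t := by
  by_contra hlt
  push_neg at hlt
  have hsub : s.filter (fun x => x ≤ t) ⊆
      Finset.image (s.orderEmbOfFin h) (Finset.univ.filter (fun j : Fin m => j < k)) := by
    intro x hx
    rw [Finset.mem_filter] at hx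
    obtain ⟨j, hj⟩ : ∃ j, s.orderEmbOfFin h j = x := by
      have : x ∈ Set.range (s.orderEmbOfFin h) := by
        rw [Finset.range_orderEmbOfFin]; exact hx.1
      exact this
    have hjk : j < k := by
      by_contra hge
      push_neg at hge
      have h1 : s.orderEmbOfFin h k ≤ s.orderEmbOfFin h j := (s.orderEmbOfFin h).monotone hge
      rw [hj] at h1
      exact absurd (lt_of_le_of_lt (le_trans h1 hx.2) hlt) (lt_irrefl _)
    exact Finset.mem_image.mpr ⟨j, by simp [hjk], hj⟩
  have hle := Finset.card_le_card hsub
  have : (Finset.image (s.orderEmbOfFin h) (Finset.univ.filter (fun j : Fin m => j < k))).card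
      ≤ k := by
    calc _ ≤ (Finset.univ.filter (fun j : Fin m => j < k)).card := Finset.card_image_le
    _ = k := by
      have : Finset.univ.filter (fun j : Fin m => j < k) = Finset.Iio k := by ext j; simp
      rw [this, Fin.card_Iio]
  omega

/-- At least `k+1` elements of `s` are `≤` its `k`-th element. -/
lemma card_le_filter_orderEmbOfFin {α : Type*} [LinearOrder α] {s : Finset α} {m : ℕ}
    (h : s.card = m) (k : Fin m) :
    k + 1 ≤ (s.filter (fun x => x ≤ s.orderEmbOfFin h k)).card := by
  have hsub : Finset.image (s.orderEmbOfFin h) (Finset.univ.filter (fun j : Fin m => j ≤ k))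
      ⊆ s.filter (fun x => x ≤ s.orderEmbOfFin h k) := by
    intro x hx
    rw [Finset.mem_image] at hx
    obtain ⟨j, hj, rfl⟩ := hx
    rw [Finset.mem_filter] at hj ⊢
    exact ⟨Finset.orderEmbOfFin_mem s h j, (s.orderEmbOfFin h).monotone hj.2⟩
  calc (k : ℕ) + 1
      = (Finset.univ.filter (fun j : Fin m => j ≤ k)).card := by
        have : Finset.univ.filter (fun j : Fin m => j ≤ k) = Finset.Iic k := by ext j; simp
        rw [this, Fin.card_Iic]
    _ = (Finset.image (s.orderEmbOfFin h) (Finset.univ.filter (fun j : Fin m => j ≤ k))).card :=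
        (Finset.card_image_of_injective _ (s.orderEmbOfFin h).injective).symm
    _ ≤ _ := Finset.card_le_card hsub


variable {n : ℕ}

lemma box_12 (c : Fin 3) (k k' : ℕ) :
    (box c k).1 = (box c k').1 ∧ (box c k).2.1 = (box c k').2.1 := by
  fin_cases c <;> simp [box]

lemma mem_k_lt {p : ℕ × ℕ × ℕ} (hp : p ∈ cylShape21 n) : p.2.2 < n := (mem_cyl.mp hp).1

lemma mem_eq_box {p : ℕ × ℕ × ℕ} (hp : p ∈ cylShape21 n) : p = box (col p) p.2.2 :=
  (mem_cyl.mp hp).2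

/-- The set of times at which the word takes the value `c`. -/
def T (w : Fin (3 * n) → Fin 3) (c : Fin 3) : Finset (Fin (3 * n)) :=
  Finset.univ.filter (fun t => w t = c)

lemma cnt_eq_T (w : Fin (3 * n) → Fin 3) (c : Fin 3) (t : Fin (3 * n)) :
    cnt w ((t : ℕ) + 1) c = ((T w c).filter (fun x => x ≤ t)).card := by
  unfold cnt T
  rw [Finset.filter_filter]
  congr 1
  ext x
  simp only [Finset.mem_filter, Finset.mem_univ, true_and, Fin.le_def, Nat.lt_succ_iff]
  tauto

lemma card_T {w : Fin (3 * n) → Fin 3} {c : Fin 3} (hw : cnt w (3 * n) c = n) :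
    (T w c).card = n := by
  calc (T w c).card = cnt w (3 * n) c := by
        unfold cnt T
        congr 1
        ext x
        simp [x.isLt]
    _ = n := hw

/-- Key ballot-type comparison: the `k`-th element of `T w 0` comes strictly before the
`k`-th element of `T w c` for `c = 1, 2`. -/
lemma cross {w : Fin (3 * n) → Fin 3}
    (hw : ∀ i : ℕ, cnt w i 1 ≤ cnt w i 0 ∧ cnt w i 2 ≤ cnt w i 0)
    {c : Fin 3} (hc : c = 1 ∨ c = 2) (h0 : (T w 0).card = n) (hcc : (T w c).card = n)
    (k : Fin n) :
    (T w 0).orderEmbOfFin h0 k < (T w c).orderEmbOfFin hcc k := by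
  set t := (T w c).orderEmbOfFin hcc k with ht
  have h1 : (k : ℕ) + 1 ≤ ((T w c).filter (fun x => x ≤ t)).card :=
    card_le_filter_orderEmbOfFin hcc k
  rw [← cnt_eq_T] at h1
  have h2 : (k : ℕ) + 1 ≤ cnt w ((t : ℕ) + 1) 0 := by
    rcases hc with rfl | rfl
    · exact le_trans h1 (hw _).1
    · exact le_trans h1 (hw _).2
  rw [cnt_eq_T] at h2
  have h3 : (T w 0).orderEmbOfFin h0 k ≤ t := orderEmbOfFin_le_of_card h0 k t h2
  rcases lt_or_eq_of_le h3 with h | h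
  · exact h
  · exfalso
    have hm0 : (T w 0).orderEmbOfFin h0 k ∈ T w 0 := Finset.orderEmbOfFin_mem _ _ _
    have hmc : t ∈ T w c := Finset.orderEmbOfFin_mem _ _ _
    rw [h] at hm0
    simp only [T, Finset.mem_filter] at hm0 hmc
    rw [hm0.2] at hmc
    rcases hc with rfl | rfl <;> exact absurd hmc.2 (by decide)

/-- The word associated to a tableau. -/
noncomputable def wd (f : cylShape21 n → Fin (cylShape21 n).card) (hf : Function.Bijective f) :
    Fin (3 * n) → Fin 3 :=
  fun t => col ((Equiv.ofBijective f hf).symm (Fin.cast (card_cyl n).symm t) : ℕ × ℕ × ℕ)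

lemma wd_apply_cast (f : cylShape21 n → Fin (cylShape21 n).card) (hf : Function.Bijective f)
    (p : cylShape21 n) :
    wd f hf (Fin.cast (card_cyl n) (f p)) = col (p : ℕ × ℕ × ℕ) := by
  unfold wd
  have : Fin.cast (card_cyl n).symm (Fin.cast (card_cyl n) (f p)) = f p := rfl
  rw [this]
  have : (Equiv.ofBijective f hf).symm (f p) = p := Equiv.ofBijective_symm_apply_apply f hf p
  rw [this]

lemma cnt_wd (f : cylShape21 n → Fin (cylShape21 n).card) (hf : Function.Bijective f)
    (i : ℕ) (c : Fin 3) :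
    cnt (wd f hf) i c =
      ((cylShape21 n).attach.filter
        (fun p => (f p : ℕ) < i ∧ col (p : ℕ × ℕ × ℕ) = c)).card := by
  symm
  apply Finset.card_bij'
    (i := fun p _ => Fin.cast (card_cyl n) (f p))
    (j := fun t _ => (Equiv.ofBijective f hf).symm (Fin.cast (card_cyl n).symm t))
  · intro p hp
    simp only [Finset.mem_filter, Finset.mem_attach, true_and] at hp
    simp only [Finset.mem_filter, Finset.mem_univ, true_and]
    exact ⟨hp.1, by rw [wd_apply_cast f hf p]; exact hp.2⟩
  · intro t ht
    simp only [Finset.mem_filter, Finset.mem_univ, true_and] at ht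
    simp only [Finset.mem_filter, Finset.mem_attach, true_and]
    constructor
    · have : f ((Equiv.ofBijective f hf).symm (Fin.cast (card_cyl n).symm t)) =
        Fin.cast (card_cyl n).symm t := Equiv.ofBijective_apply_symm_apply f hf _
      rw [this]
      exact ht.1
    · exact ht.2
  · intro p hp
    exact Equiv.ofBijective_symm_apply_apply f hf p
  · intro t ht
    have : f ((Equiv.ofBijective f hf).symm (Fin.cast (card_cyl n).symm t)) =
        Fin.cast (card_cyl n).symm t := Equiv.ofBijective_apply_symm_apply f hf _
    rw [this]
    rfl

/-- Comparison of column counts coming from pointwise comparisons of tableau entries. -/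
lemma card_col_le (f : cylShape21 n → Fin (cylShape21 n).card) (i : ℕ) (c : Fin 3)
    (hlt : ∀ k (hk : k < n),
      f ⟨box 0 k, box_mem.mpr hk⟩ < f ⟨box c k, box_mem.mpr hk⟩) :
    ((cylShape21 n).attach.filter (fun p => (f p : ℕ) < i ∧ col (p : ℕ × ℕ × ℕ) = c)).card ≤
      ((cylShape21 n).attach.filter (fun p => (f p : ℕ) < i ∧ col (p : ℕ × ℕ × ℕ) = 0)).card := by
  apply Finset.card_le_card_of_injOn
    (f := fun (p : cylShape21 n) =>
      (⟨box 0 (p : ℕ × ℕ × ℕ).2.2, box_mem.mpr (mem_k_lt p.2)⟩ : cylShape21 n))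
  · intro p hp
    simp only [Finset.mem_coe, Finset.mem_filter, Finset.mem_attach, true_and] at hp
    simp only [Finset.mem_coe, Finset.mem_filter, Finset.mem_attach, true_and]
    have hpb : (p : ℕ × ℕ × ℕ) = box c (p : ℕ × ℕ × ℕ).2.2 := by
      conv_lhs => rw [mem_eq_box p.2, hp.2]
    have hpeq : p = ⟨box c (p : ℕ × ℕ × ℕ).2.2, box_mem.mpr (mem_k_lt p.2)⟩ :=
      Subtype.ext hpb
    refine ⟨?_, by simp⟩
    have h1 := hlt (p : ℕ × ℕ × ℕ).2.2 (mem_k_lt p.2)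
    rw [← hpeq] at h1
    exact lt_trans (Fin.lt_def.mp h1) hp.1
  · intro p hp q hq hpq
    simp only [Finset.mem_coe, Finset.mem_filter, Finset.mem_attach, true_and] at hp hq
    simp only [Subtype.mk.injEq] at hpq
    have hk := (box_injective (a₁ := ((0 : Fin 3), (p : ℕ × ℕ × ℕ).2.2))
      (a₂ := ((0 : Fin 3), (q : ℕ × ℕ × ℕ).2.2)) hpq)
    have hk2 : (p : ℕ × ℕ × ℕ).2.2 = (q : ℕ × ℕ × ℕ).2.2 := (Prod.ext_iff.mp hk).2
    apply Subtype.ext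
    conv_lhs => rw [mem_eq_box p.2, hp.2, hk2]
    conv_rhs => rw [mem_eq_box q.2, hq.2]

/-- The word of a tableau satisfies the ballot conditions. -/
lemma wd_ballot (f : cylShape21 n → Fin (cylShape21 n).card) (hf : IsSSYT3 (cylShape21 n) f)
    (i : ℕ) : cnt (wd f hf.1) i 1 ≤ cnt (wd f hf.1) i 0 ∧
      cnt (wd f hf.1) i 2 ≤ cnt (wd f hf.1) i 0 := by
  obtain ⟨hbij, hx, hy, hz⟩ := hf
  refine ⟨?_, ?_⟩
  · rw [cnt_wd, cnt_wd]
    apply card_col_le f i 1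
    intro k hk
    exact hy ⟨box 0 k, box_mem.mpr hk⟩ ⟨box 1 k, box_mem.mpr hk⟩
      (by simp [box]) (by simp) (by simp [box])
  · rw [cnt_wd, cnt_wd]
    apply card_col_le f i 2
    intro k hk
    exact hx ⟨box 0 k, box_mem.mpr hk⟩ ⟨box 2 k, box_mem.mpr hk⟩
      (by simp [box]) (by simp [box])

/-- The word of a tableau has `n` letters of each kind. -/
lemma wd_count (f : cylShape21 n → Fin (cylShape21 n).card) (hf : Function.Bijective f)
    (c : Fin 3) : cnt (wd f hf) (3 * n) c = n := by
  rw [cnt_wd]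
  have h1 : (cylShape21 n).attach.filter
      (fun p => (f p : ℕ) < 3 * n ∧ col (p : ℕ × ℕ × ℕ) = c) =
      (cylShape21 n).attach.filter
        (fun (p : {x // x ∈ cylShape21 n}) => col (p : ℕ × ℕ × ℕ) = c) := by
    apply Finset.filter_congr
    intro p _
    have : (f p : ℕ) < 3 * n := by
      have := (f p).isLt
      exact lt_of_lt_of_le this (card_cyl n).le
    simp [this]
  rw [h1]
  have h2 : ((cylShape21 n).attach.filter
      (fun (p : {x // x ∈ cylShape21 n}) => col (p : ℕ × ℕ × ℕ) = c)).card =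
      (Finset.range n).card := by
    refine Finset.card_bij'
      (fun p _ => (p : ℕ × ℕ × ℕ).2.2)
      (fun k hk => (⟨box c k, box_mem.mpr (Finset.mem_range.mp hk)⟩ : cylShape21 n))
      ?_ ?_ ?_ ?_
    · intro p hp
      simp only [Finset.mem_filter, Finset.mem_attach, true_and] at hp
      exact Finset.mem_range.mpr (mem_k_lt p.2)
    · intro k hk
      simp only [Finset.mem_filter, Finset.mem_attach, true_and]
      simp
    · intro p hp
      simp only [Finset.mem_filter, Finset.mem_attach, true_and] at hp
      apply Subtype.ext
      conv_rhs => rw [mem_eq_box p.2, hp]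
    · intro k hk
      simp
  rw [h2, Finset.card_range]

variable (dummy : ℕ)


/-- The tableau associated to a word. -/
noncomputable def tab (w : Fin (3 * n) → Fin 3)
    (hw : ∀ j : Fin 3, cnt w (3 * n) j = n) :
    cylShape21 n → Fin (cylShape21 n).card :=
  fun p => Fin.cast (card_cyl n).symm
    ((T w (col (p : ℕ × ℕ × ℕ))).orderEmbOfFin (card_T (hw _))
      ⟨(p : ℕ × ℕ × ℕ).2.2, mem_k_lt p.2⟩)

lemma tab_box (w : Fin (3 * n) → Fin 3) (hw : ∀ j : Fin 3, cnt w (3 * n) j = n)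
    (c : Fin 3) (k : ℕ) (hk : k < n) :
    tab w hw ⟨box c k, box_mem.mpr hk⟩ =
      Fin.cast (card_cyl n).symm
        ((T w c).orderEmbOfFin (card_T (hw c)) ⟨k, hk⟩) := by
  simp [tab]

lemma mem_T_iff {w : Fin (3 * n) → Fin 3} {c : Fin 3} {t : Fin (3 * n)} :
    t ∈ T w c ↔ w t = c := by simp [T]

lemma col_cases (c : Fin 3) : c = 0 ∨ c = 1 ∨ c = 2 := by
  fin_cases c <;> simp

/-- The tableau associated to a good word is a solid standard Young tableau. -/
lemma tab_ssyt (w : Fin (3 * n) → Fin 3)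
    (hb : ∀ i : ℕ, cnt w i 1 ≤ cnt w i 0 ∧ cnt w i 2 ≤ cnt w i 0)
    (hw : ∀ j : Fin 3, cnt w (3 * n) j = n) :
    IsSSYT3 (cylShape21 n) (tab w hw) := by
  have key : ∀ (a : cylShape21 n),
      tab w hw a = Fin.cast (card_cyl n).symm
        ((T w (col (a : ℕ × ℕ × ℕ))).orderEmbOfFin (card_T (hw _))
          ⟨(a : ℕ × ℕ × ℕ).2.2, mem_k_lt a.2⟩) := fun a => rfl
  refine ⟨?_, ?_, ?_, ?_⟩
  · constructor
    · -- injective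
      intro a b hab
      rw [key, key] at hab
      have hab' : ((T w (col (a : ℕ × ℕ × ℕ))).orderEmbOfFin (card_T (hw _))
            ⟨(a : ℕ × ℕ × ℕ).2.2, mem_k_lt a.2⟩ : Fin (3 * n)) =
          (T w (col (b : ℕ × ℕ × ℕ))).orderEmbOfFin (card_T (hw _))
            ⟨(b : ℕ × ℕ × ℕ).2.2, mem_k_lt b.2⟩ := by
        have := congrArg (Fin.cast (card_cyl n)) hab
        exact this
      have hcol : col (a : ℕ × ℕ × ℕ) = col (b : ℕ × ℕ × ℕ) := by
        have h1 := mem_T_iff.mp (Finset.orderEmbOfFin_mem (T w (col (a : ℕ × ℕ × ℕ)))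
          (card_T (hw _)) ⟨(a : ℕ × ℕ × ℕ).2.2, mem_k_lt a.2⟩)
        have h2 := mem_T_iff.mp (Finset.orderEmbOfFin_mem (T w (col (b : ℕ × ℕ × ℕ)))
          (card_T (hw _)) ⟨(b : ℕ × ℕ × ℕ).2.2, mem_k_lt b.2⟩)
        rw [hab'] at h1
        rw [h1] at h2
        exact h2
      rw [hcol] at hab'
      have hk : (a : ℕ × ℕ × ℕ).2.2 = (b : ℕ × ℕ × ℕ).2.2 := by
        have := Finset.orderEmbOfFin_eq_orderEmbOfFin_iff.mp hab'
        simpa using this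
      apply Subtype.ext
      conv_lhs => rw [mem_eq_box a.2, hcol, hk]
      conv_rhs => rw [mem_eq_box b.2]
    · -- surjective
      intro y
      set t : Fin (3 * n) := Fin.cast (card_cyl n) y with hty
      have htT : t ∈ T w (w t) := mem_T_iff.mpr rfl
      have : (t : Fin (3 * n)) ∈ Set.range ((T w (w t)).orderEmbOfFin (card_T (hw _))) := by
        rw [Finset.range_orderEmbOfFin]
        exact htT
      obtain ⟨j, hj⟩ := this
      refine ⟨⟨box (w t) j, box_mem.mpr j.2⟩, ?_⟩
      rw [tab_box (hk := j.2)]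
      have hjj : (⟨(j : ℕ), j.2⟩ : Fin n) = j := rfl
      rw [hjj, hj]
      rfl
  · -- x-direction (condition with a.2 = b.2, a.1 < b.1)
    intro a b h2 h1
    have ha := mem_eq_box a.2
    have hb' := mem_eq_box b.2
    have hk : (a : ℕ × ℕ × ℕ).2.2 = (b : ℕ × ℕ × ℕ).2.2 := congrArg Prod.snd h2
    have hca : col (a : ℕ × ℕ × ℕ) = 0 ∧ col (b : ℕ × ℕ × ℕ) = 2 := by
      rcases col_cases (col (a : ℕ × ℕ × ℕ)) with h | h | h <;>
        rcases col_cases (col (b : ℕ × ℕ × ℕ)) with h' | h' | h' <;>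
        rw [h] at ha <;> rw [h'] at hb' <;>
        simp only [box] at ha hb' <;>
        first
          | exact ⟨h, h'⟩
          | (exfalso; rw [ha, hb'] at h1 h2; simp at h1 h2)
    rw [key a, key b, Fin.cast_lt_cast]
    have hcross := cross hb (Or.inr rfl) (card_T (hw 0)) (card_T (hw 2))
      ⟨(a : ℕ × ℕ × ℕ).2.2, mem_k_lt a.2⟩
    rw [hca.1, hca.2]
    have : (⟨(a : ℕ × ℕ × ℕ).2.2, mem_k_lt a.2⟩ : Fin n) =
        ⟨(b : ℕ × ℕ × ℕ).2.2, mem_k_lt b.2⟩ := by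
      apply Fin.ext; exact hk
    rw [← this]
    exact hcross
  · -- y-direction (a.1 = b.1, a.2.2 = b.2.2, a.2.1 < b.2.1)
    intro a b h1 h3 h2
    have ha := mem_eq_box a.2
    have hb' := mem_eq_box b.2
    have hca : col (a : ℕ × ℕ × ℕ) = 0 ∧ col (b : ℕ × ℕ × ℕ) = 1 := by
      rcases col_cases (col (a : ℕ × ℕ × ℕ)) with h | h | h <;>
        rcases col_cases (col (b : ℕ × ℕ × ℕ)) with h' | h' | h' <;>
        rw [h] at ha <;> rw [h'] at hb' <;>
        simp only [box] at ha hb' <;>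
        first
          | exact ⟨h, h'⟩
          | (exfalso; rw [ha, hb'] at h1 h2; simp at h1 h2)
    rw [key a, key b, Fin.cast_lt_cast]
    have hcross := cross hb (Or.inl rfl) (card_T (hw 0)) (card_T (hw 1))
      ⟨(a : ℕ × ℕ × ℕ).2.2, mem_k_lt a.2⟩
    rw [hca.1, hca.2]
    have : (⟨(a : ℕ × ℕ × ℕ).2.2, mem_k_lt a.2⟩ : Fin n) =
        ⟨(b : ℕ × ℕ × ℕ).2.2, mem_k_lt b.2⟩ := by
      apply Fin.ext; exact h3
    rw [← this]
    exact hcross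
  · -- z-direction (a.1 = b.1, a.2.1 = b.2.1, a.2.2 < b.2.2)
    intro a b h1 h2 h3
    have hcol : col (a : ℕ × ℕ × ℕ) = col (b : ℕ × ℕ × ℕ) := by
      simp [col, h1, h2]
    rw [key a, key b, Fin.cast_lt_cast]
    have := ((T w (col (a : ℕ × ℕ × ℕ))).orderEmbOfFin (card_T (hw _))).strictMono
      (show (⟨(a : ℕ × ℕ × ℕ).2.2, mem_k_lt a.2⟩ : Fin n) <
        ⟨(b : ℕ × ℕ × ℕ).2.2, mem_k_lt b.2⟩ from h3)
    rw [hcol] at this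
    rw [hcol]
    exact this

/-- Round trip: the tableau built from the word of a tableau is the original tableau. -/
lemma tab_wd (f : cylShape21 n → Fin (cylShape21 n).card) (hf : IsSSYT3 (cylShape21 n) f)
    (hw : ∀ j : Fin 3, cnt (wd f hf.1) (3 * n) j = n) :
    tab (wd f hf.1) hw = f := by
  funext p
  set w := wd f hf.1 with hwdef
  have main : ∀ c : Fin 3,
      (fun (k : Fin n) => Fin.cast (card_cyl n) (f ⟨box c k, box_mem.mpr k.2⟩)) =
        ((T w c).orderEmbOfFin (card_T (hw c)) : Fin n → Fin (3 * n)) := by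
    intro c
    apply Finset.orderEmbOfFin_unique
    · intro k
      rw [mem_T_iff]
      exact (wd_apply_cast f hf.1 _).trans (col_box c _)
    · intro k k' hkk
      have := hf.2.2.2 ⟨box c k, box_mem.mpr k.2⟩ ⟨box c k', box_mem.mpr k'.2⟩
        (box_12 c k k').1 (box_12 c k k').2 (by rw [box_k, box_k]; exact hkk)
      exact (Fin.cast_lt_cast (card_cyl n)).mpr this
  have hkp := mem_k_lt p.2
  have hp1 : tab w hw p = tab w hw ⟨box (col (p : ℕ × ℕ × ℕ)) (p : ℕ × ℕ × ℕ).2.2,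
      box_mem.mpr hkp⟩ := by
    congr 1
    exact Subtype.ext (mem_eq_box p.2)
  rw [hp1, tab_box w hw (col (p : ℕ × ℕ × ℕ)) (p : ℕ × ℕ × ℕ).2.2 hkp, ← main (col (p : ℕ × ℕ × ℕ))]
  show Fin.cast (card_cyl n).symm (Fin.cast (card_cyl n)
    (f ⟨box (col (p : ℕ × ℕ × ℕ)) (p : ℕ × ℕ × ℕ).2.2, _⟩)) = f p
  have hpe : (⟨box (col (p : ℕ × ℕ × ℕ)) (p : ℕ × ℕ × ℕ).2.2,
      box_mem.mpr hkp⟩ : cylShape21 n) = p := Subtype.ext (mem_eq_box p.2).symm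
  rw [hpe]
  rfl

/-- Round trip: the word of the tableau built from a word is the original word. -/
lemma wd_tab (w : Fin (3 * n) → Fin 3) (hw : ∀ j : Fin 3, cnt w (3 * n) j = n)
    (hbij : Function.Bijective (tab w hw)) :
    wd (tab w hw) hbij = w := by
  funext t
  have htT : t ∈ T w (w t) := mem_T_iff.mpr rfl
  have hrange : t ∈ Set.range ((T w (w t)).orderEmbOfFin (card_T (hw _))) := by
    rw [Finset.range_orderEmbOfFin]
    exact htT
  obtain ⟨j, hj⟩ := hrange
  have htab : tab w hw ⟨box (w t) j, box_mem.mpr j.2⟩ = Fin.cast (card_cyl n).symm t := by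
    rw [tab_box (hk := j.2)]
    have hjj : (⟨(j : ℕ), j.2⟩ : Fin n) = j := rfl
    rw [hjj, hj]
  have hsymm : (Equiv.ofBijective (tab w hw) hbij).symm (Fin.cast (card_cyl n).symm t) =
      ⟨box (w t) j, box_mem.mpr j.2⟩ :=
    (Equiv.ofBijective (tab w hw) hbij).symm_apply_eq.mpr htab.symm
  show col (((Equiv.ofBijective (tab w hw) hbij).symm
    (Fin.cast (card_cyl n).symm t) : cylShape21 n) : ℕ × ℕ × ℕ) = w t
  rw [hsymm]
  exact col_box _ _

end SSYTAux

/-- The number of solid standard Young tableaux of shape `(2,1) × {1,…,n}`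
equals the number of lattice paths from `(0,0,0)` to `(n,n,n)` with positive
unit steps whose every visited point `(x₁,x₂,x₃)` satisfies `x₁ ≥ x₂` and
`x₁ ≥ x₃`. -/
theorem ssyt3_cyl21_eq_lattice_paths (n : ℕ) :
    ssyt3Count (cylShape21 n) =
      Nat.card {w : Fin (3 * n) → Fin 3 //
        (∀ i : ℕ, cnt w i 1 ≤ cnt w i 0 ∧ cnt w i 2 ≤ cnt w i 0) ∧
        (∀ j : Fin 3, cnt w (3 * n) j = n)} := by
  apply Nat.card_congr
  refine ⟨fun F => ⟨SSYTAux.wd F.1 F.2.1,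
      fun i => SSYTAux.wd_ballot F.1 F.2 i, fun c => SSYTAux.wd_count F.1 F.2.1 c⟩,
    fun W => ⟨SSYTAux.tab W.1 W.2.2, SSYTAux.tab_ssyt W.1 W.2.1 W.2.2⟩, ?_, ?_⟩
  · rintro ⟨f, hf⟩
    apply Subtype.ext
    exact SSYTAux.tab_wd f hf (fun c => SSYTAux.wd_count f hf.1 c)
  · rintro ⟨w, hw⟩
    apply Subtype.ext
    exact SSYTAux.wd_tab w hw.2 (SSYTAux.tab_ssyt w hw.1 hw.2).1
end
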